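/- arXiv:2308.00385 — 5 statements merged into one kernel-verified Lean document; each statement's English description precedes it below -/
import Mathlib

section
/- Let α > 0 and let 0 ≤ θ₁ < θ₂ < θ₃ < π be three angles such that θ₂ − θ₁ < π/2, θ₃ − θ₂ < π/2, and π − (θ₃ − θ₁) < π/2 (so that ℂ minus the three lines L_j = e^{iθ_j}·ℝ, j = 1,2,3, consists of six sectors each with acute opening angle at the origin). Then L₁ ∪ L₂ ∪ L₃ is a Liouville set for the Fock space F_α(ℂ). -/
open MeasureTheory Complex

open Set Filter

local notation "π" => Real.pi

set_option maxHeartbeats 1000000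

lemma circle_mean_le {f : ℂ → ℂ} (hf : Differentiable ℂ f) (z : ℂ) {ρ : ℝ} (hρ : 0 < ρ) :
    (2*π) * ‖f z‖ ≤ ∫ t in (0:ℝ)..(2*π), ‖f (z + (ρ:ℂ) * ((Real.cos t : ℂ) + (Real.sin t : ℂ) * Complex.I))‖ := by
  have h := (hf.differentiableOn (s := Metric.closedBall z ρ)).circleIntegral_sub_inv_smul
      (w := z) (Metric.mem_ball_self hρ)
  have hmap : ∀ t : ℝ, circleMap z ρ t = z + (ρ:ℂ) * ((Real.cos t : ℂ) + (Real.sin t : ℂ) * Complex.I) := by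
    intro t
    rw [circleMap, Complex.exp_mul_I, ← Complex.ofReal_cos, ← Complex.ofReal_sin]
  have key : (∮ w in C(z, ρ), (w - z)⁻¹ • f w)
      = ∫ t in (0:ℝ)..(2*π), Complex.I * f (circleMap z ρ t) := by
    rw [circleIntegral]
    congr 1; funext t
    rw [deriv_circleMap, circleMap_sub_center]
    have hne : circleMap 0 ρ t ≠ 0 := circleMap_ne_center hρ.ne'
    field_simp [smul_eq_mul]
    rw [smul_eq_mul, smul_eq_mul, one_div, ← mul_assoc, mul_assoc (circleMap 0 ρ t), mul_comm I,
      ← mul_assoc, mul_inv_cancel₀ hne, one_mul]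
  rw [key] at h
  have hnorm : ‖(2 * (π:ℂ) * Complex.I) • f z‖ = (2*π) * ‖f z‖ := by
    simp [norm_smul, Complex.norm_real, abs_of_pos Real.pi_pos, mul_comm]
  calc (2*π) * ‖f z‖ = ‖∫ t in (0:ℝ)..(2*π), Complex.I * f (circleMap z ρ t)‖ := by
        rw [h, hnorm]
    _ ≤ ∫ t in (0:ℝ)..(2*π), ‖Complex.I * f (circleMap z ρ t)‖ :=
        intervalIntegral.norm_integral_le_integral_norm (by positivity)
    _ = ∫ t in (0:ℝ)..(2*π), ‖f (z + (ρ:ℂ) * ((Real.cos t : ℂ) + (Real.sin t : ℂ) * Complex.I))‖ := by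
        congr 1; funext t; rw [norm_mul, Complex.norm_I, one_mul, hmap]

lemma fock_growth {α : ℝ} (hα : 0 < α) {F : ℂ → ℂ} (hd : Differentiable ℂ F)
    (hint : Integrable fun z : ℂ => ‖F z‖ ^ 2 * Real.exp (-α * ‖z‖ ^ 2)) :
    ∃ B > 0, ∀ z, ‖F z‖ ≤ B * Real.exp (α * ‖z‖^2) := by
  set I₀ : ℝ := ∫ z : ℂ, ‖F z‖ ^ 2 * Real.exp (-α * ‖z‖ ^ 2) with hI₀
  have hI₀nn : 0 ≤ I₀ := integral_nonneg fun z => by positivity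
  set u : ℂ → ℝ := fun w => ‖F w‖ ^ 2 with hu_def
  have hu : Continuous u := hd.continuous.norm.pow 2
  have hπ := Real.pi_pos
  have main : ∀ z : ℂ, π * u z ≤ Real.exp (α * (‖z‖+1)^2) * I₀ := by
    intro z
    set W : ℝ × ℝ → ℝ := fun p => p.1 * u (z + Complex.polarCoord.symm p) with hW_def
    have hWc : Continuous W := by
      apply continuous_fst.mul
      apply hu.comp
      apply continuous_const.add
      have he : (fun p : ℝ × ℝ => Complex.polarCoord.symm p)
          = fun p : ℝ × ℝ => (p.1:ℂ) * ((Real.cos p.2 : ℂ) + (Real.sin p.2:ℂ) * Complex.I) :=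
        funext fun p => Complex.polarCoord_symm_apply p
      have hc2 : Continuous fun p : ℝ × ℝ => (p.1:ℂ) * ((Real.cos p.2 : ℂ) + (Real.sin p.2:ℂ) * Complex.I) := by fun_prop
      rwa [← he] at hc2
    set g : ℂ → ℝ := Set.indicator (Metric.closedBall (0:ℂ) 1) (fun w => u (z + w)) with hg_def
    have polar := Complex.integral_comp_polarCoord_symm g
    -- RHS estimate
    have hRHS : (∫ w : ℂ, g w) ≤ Real.exp (α * (‖z‖+1)^2) * I₀ := by
      have h1 : (∫ w : ℂ, g w) = ∫ w in Metric.closedBall z 1, u w := by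
        have e1 : ∀ w : ℂ, g w = Set.indicator (Metric.closedBall z 1) u (z + w) := by
          intro w
          by_cases hw : w ∈ Metric.closedBall (0:ℂ) 1
          · have : z + w ∈ Metric.closedBall z 1 := by
              simpa [Metric.mem_closedBall, dist_eq_norm] using Metric.mem_closedBall.mp hw
            simp [hg_def, Set.indicator_of_mem hw, Set.indicator_of_mem this]
          · have : z + w ∉ Metric.closedBall z 1 := by
              simp only [Metric.mem_closedBall, dist_eq_norm, add_sub_cancel_left] at *
              simpa [dist_eq_norm] using hw
            simp [hg_def, Set.indicator_of_notMem hw, Set.indicator_of_notMem this]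
        rw [funext e1, integral_add_left_eq_self, integral_indicator measurableSet_closedBall]
      rw [h1]
      have hIu : IntegrableOn u (Metric.closedBall z 1) :=
        hu.continuousOn.integrableOn_compact (isCompact_closedBall z 1)
      have hIw : IntegrableOn
          (fun w => Real.exp (α*(‖z‖+1)^2) * (u w * Real.exp (-α * ‖w‖^2)))
          (Metric.closedBall z 1) := (hint.integrableOn).const_mul _
      calc ∫ w in Metric.closedBall z 1, u w
          ≤ ∫ w in Metric.closedBall z 1,
              Real.exp (α*(‖z‖+1)^2) * (u w * Real.exp (-α*‖w‖^2)) := by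
            apply setIntegral_mono_on hIu hIw measurableSet_closedBall
            intro w hw
            have hwz : ‖w - z‖ ≤ 1 := by
              simpa [Metric.mem_closedBall, dist_eq_norm] using hw
            have hwle : ‖w‖ ≤ ‖z‖ + 1 := by
              calc ‖w‖ = ‖w - z + z‖ := by ring_nf
                _ ≤ ‖w - z‖ + ‖z‖ := norm_add_le _ _
                _ ≤ ‖z‖ + 1 := by linarith
            have h3 : (1:ℝ) ≤ Real.exp (α*(‖z‖+1)^2) * Real.exp (-α*‖w‖^2) := by
              rw [← Real.exp_add]
              apply Real.one_le_exp
              nlinarith [pow_le_pow_left₀ (norm_nonneg w) hwle 2]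
            have hun : 0 ≤ u w := by positivity
            nlinarith
        _ = Real.exp (α*(‖z‖+1)^2) * ∫ w in Metric.closedBall z 1, u w * Real.exp (-α*‖w‖^2) :=
            integral_const_mul _ _
        _ ≤ Real.exp (α*(‖z‖+1)^2) * I₀ := by
            apply mul_le_mul_of_nonneg_left _ (Real.exp_nonneg _)
            apply setIntegral_le_integral hint
            filter_upwards with w using by positivity
    -- LHS : polar side equals integral over S of W
    set S : Set (ℝ × ℝ) := Ioc (0:ℝ) 1 ×ˢ Ioo (-π) π with hS_def
    have hLHS : (∫ p in polarCoord.target, p.1 • g (Complex.polarCoord.symm p)) = ∫ p in S, W p := by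
      have hmeasS : MeasurableSet S := (measurableSet_Ioc.prod measurableSet_Ioo)
      have hcong : ∀ p ∈ polarCoord.target, p.1 • g (Complex.polarCoord.symm p)
          = Set.indicator S W p := by
        intro p hp
        have hp1 : 0 < p.1 := hp.1
        have habs : ‖Complex.polarCoord.symm p‖ = |p.1| := Complex.norm_polarCoord_symm p
        by_cases hle : p.1 ≤ 1
        · have hmem : Complex.polarCoord.symm p ∈ Metric.closedBall (0:ℂ) 1 := by
            simp only [Metric.mem_closedBall, dist_zero_right, habs,
              abs_of_pos hp1]
            exact hle
          have hpS : p ∈ S := ⟨⟨hp1, hle⟩, hp.2⟩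
          rw [Set.indicator_of_mem hpS, hg_def, Set.indicator_of_mem hmem]
          simp [hW_def, smul_eq_mul]
        · have hmem : Complex.polarCoord.symm p ∉ Metric.closedBall (0:ℂ) 1 := by
            simp only [Metric.mem_closedBall, dist_zero_right, habs,
              abs_of_pos hp1]
            exact hle
          have hpS : p ∉ S := fun h => hle h.1.2
          rw [Set.indicator_of_notMem hpS, hg_def, Set.indicator_of_notMem hmem, smul_zero]
      rw [setIntegral_congr_fun polarCoord.open_target.measurableSet hcong,
        setIntegral_indicator hmeasS]
      congr 1
      rw [Set.inter_eq_self_of_subset_right]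
      intro p hp
      exact ⟨hp.1.1, hp.2⟩
    -- Fubini and the inner circle bound
    have hWint : IntegrableOn W S := by
      have hcpt : IsCompact (Icc (0:ℝ) 1 ×ˢ Icc (-π) π) := isCompact_Icc.prod isCompact_Icc
      have := hWc.continuousOn.integrableOn_compact (μ := volume) hcpt
      exact this.mono_set (Set.prod_mono Ioc_subset_Icc_self Ioo_subset_Icc_self)
    have hfub : (∫ p in S, W p) = ∫ ρ in Ioc (0:ℝ) 1, ∫ θ in Ioo (-π) π, W (ρ, θ) := by
      rw [hS_def, Measure.volume_eq_prod, setIntegral_prod]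
      rwa [← Measure.volume_eq_prod]
    have hinner : ∀ ρ ∈ Ioc (0:ℝ) 1, (2*π) * u z * ρ ≤ ∫ θ in Ioo (-π) π, W (ρ, θ) := by
      intro ρ hρ
      have hρ0 : 0 < ρ := hρ.1
      set v : ℝ → ℝ := fun t => u (z + (ρ:ℂ) * ((Real.cos t : ℂ) + (Real.sin t : ℂ) * Complex.I))
        with hv_def
      have hvW : ∀ θ, W (ρ, θ) = ρ * v θ := by
        intro θ
        simp [hW_def, hv_def, Complex.polarCoord_symm_apply]
      have hvc : Continuous v := by
        apply hu.comp
        apply continuous_const.add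
        fun_prop
      have hper : Function.Periodic v (2*π) := by
        intro t
        show u _ = u _
        rw [Real.cos_add_two_pi, Real.sin_add_two_pi]
      have hcirc : (2*π) * u z ≤ ∫ t in (0:ℝ)..(2*π), v t := by
        have h2 := circle_mean_le (f := fun w => (F w)^2) (hd.pow 2) z hρ0
        have : ∀ w : ℂ, ‖(F w)^2‖ = u w := fun w => by rw [norm_pow]
        simpa [this, hv_def, hu_def] using h2
      have hchain : (∫ θ in Ioo (-π) π, v θ) = ∫ t in (0:ℝ)..(2*π), v t := by
        rw [← integral_Ioc_eq_integral_Ioo, ← intervalIntegral.integral_of_le (by linarith)]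
        have := hper.intervalIntegral_add_eq (-π) 0
        rw [show -π + 2*π = π by ring, zero_add] at this
        exact this
      calc (2*π) * u z * ρ = ρ * ((2*π) * u z) := by ring
        _ ≤ ρ * ∫ t in (0:ℝ)..(2*π), v t := by
            exact mul_le_mul_of_nonneg_left hcirc hρ0.le
        _ = ρ * ∫ θ in Ioo (-π) π, v θ := by rw [hchain]
        _ = ∫ θ in Ioo (-π) π, ρ * v θ := (integral_const_mul _ _).symm
        _ = ∫ θ in Ioo (-π) π, W (ρ, θ) := by simp_rw [hvW]
    -- outer integration
    have houter_int : IntegrableOn (fun ρ => ∫ θ in Ioo (-π) π, W (ρ, θ)) (Ioc (0:ℝ) 1) := by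
      have := hWint
      rw [hS_def, IntegrableOn, Measure.volume_eq_prod, ← Measure.prod_restrict] at this
      exact this.integral_prod_left
    have houter : π * u z ≤ ∫ ρ in Ioc (0:ℝ) 1, ∫ θ in Ioo (-π) π, W (ρ, θ) := by
      have hmono : (∫ ρ in Ioc (0:ℝ) 1, (2*π) * u z * ρ)
          ≤ ∫ ρ in Ioc (0:ℝ) 1, ∫ θ in Ioo (-π) π, W (ρ, θ) := by
        apply setIntegral_mono_on _ houter_int measurableSet_Ioc hinner
        exact (continuous_const.mul continuous_id).integrableOn_Ioc
      have hval : (∫ ρ in Ioc (0:ℝ) 1, (2*π) * u z * ρ) = π * u z := by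
        rw [← intervalIntegral.integral_of_le zero_le_one]
        rw [intervalIntegral.integral_const_mul, integral_id]
        ring
      linarith
    have hun : 0 ≤ u z := by positivity
    calc π * u z ≤ ∫ ρ in Ioc (0:ℝ) 1, ∫ θ in Ioo (-π) π, W (ρ, θ) := houter
      _ = ∫ p in S, W p := hfub.symm
      _ = ∫ w : ℂ, g w := by rw [← hLHS, polar]
      _ ≤ Real.exp (α * (‖z‖+1)^2) * I₀ := hRHS
  -- extract the bound
  refine ⟨Real.sqrt (I₀/π) * Real.exp α + 1, by positivity, fun z => ?_⟩
  have h := main z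
  have hsq : ‖F z‖^2 ≤ ((Real.sqrt (I₀/π) * Real.exp α + 1) * Real.exp (α*‖z‖^2))^2 := by
    have hX : Real.sqrt (I₀/π)^2 = I₀/π := Real.sq_sqrt (by positivity)
    have he : Real.exp (α*(‖z‖+1)^2) ≤ Real.exp α ^2 * Real.exp (α*‖z‖^2)^2 := by
      have hEq : Real.exp α ^ 2 * Real.exp (α*‖z‖^2)^2
          = Real.exp (α + α + (α*‖z‖^2 + α*‖z‖^2)) := by
        rw [pow_two, pow_two, ← Real.exp_add, ← Real.exp_add, ← Real.exp_add]
      rw [hEq]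
      apply Real.exp_le_exp.mpr
      nlinarith [sq_nonneg (‖z‖ - 1), norm_nonneg z]
    have h1 : ‖F z‖^2 ≤ (I₀/π) * Real.exp (α*(‖z‖+1)^2) := by
      rw [div_mul_eq_mul_div, le_div_iff₀ hπ]
      calc ‖F z‖^2 * π = π * u z := by rw [hu_def]; ring
        _ ≤ Real.exp (α * (‖z‖+1)^2) * I₀ := h
        _ = I₀ * Real.exp (α*(‖z‖+1)^2) := by ring
    calc ‖F z‖^2 ≤ (I₀/π) * Real.exp (α*(‖z‖+1)^2) := h1
      _ ≤ (I₀/π) * (Real.exp α ^2 * Real.exp (α*‖z‖^2)^2) := by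
          apply mul_le_mul_of_nonneg_left he (by positivity)
      _ ≤ ((Real.sqrt (I₀/π) * Real.exp α + 1) * Real.exp (α*‖z‖^2))^2 := by
          rw [mul_pow]
          have h9 : (I₀/π) ≤ (Real.sqrt (I₀/π) * Real.exp α + 1)^2 / Real.exp α ^ 2 := by
            rw [le_div_iff₀ (by positivity)]
            nlinarith [Real.sqrt_nonneg (I₀/π), Real.exp_pos α]
          calc I₀/π * (Real.exp α ^2 * Real.exp (α*‖z‖^2)^2)
              ≤ ((Real.sqrt (I₀/π) * Real.exp α + 1)^2 / Real.exp α ^ 2)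
                * (Real.exp α ^2 * Real.exp (α*‖z‖^2)^2) := by
                apply mul_le_mul_of_nonneg_right h9 (by positivity)
            _ = (Real.sqrt (I₀/π) * Real.exp α + 1)^2 * Real.exp (α*‖z‖^2)^2 := by
                field_simp
  have hrhs_nn : 0 ≤ (Real.sqrt (I₀/π) * Real.exp α + 1) * Real.exp (α*‖z‖^2) := by positivity
  exact (pow_le_pow_iff_left₀ (norm_nonneg _) hrhs_nn two_ne_zero).mp hsq

lemma sector_bound {F : ℂ → ℂ} (hd : Differentiable ℂ F) {B b : ℝ} (hB : 0 ≤ B) (hb : 0 ≤ b)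
    (hgrowth : ∀ z, ‖F z‖ ≤ B * Real.exp (b * ‖z‖^2))
    {a₁ a₂ : ℝ} (ha : a₁ < a₂) (hw : a₂ - a₁ < π/2) {C : ℝ}
    (h₁ : ∀ t : ℝ, 0 < t → ‖F ((t:ℂ) * Complex.exp ((a₁:ℂ) * Complex.I))‖ ≤ C)
    (h₂ : ∀ t : ℝ, 0 < t → ‖F ((t:ℂ) * Complex.exp ((a₂:ℂ) * Complex.I))‖ ≤ C)
    {r ψ : ℝ} (hr : 0 < r) (hψ₁ : a₁ ≤ ψ) (hψ₂ : ψ ≤ a₂) :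
    ‖F ((r:ℂ) * Complex.exp ((ψ:ℂ) * Complex.I))‖ ≤ C := by
  set ζ : ℂ := (Real.log r : ℂ) + (ψ:ℂ) * Complex.I with hζ_def
  have hexp : Complex.exp ζ = (r:ℂ) * Complex.exp ((ψ:ℂ) * Complex.I) := by
    rw [hζ_def, Complex.exp_add, ← Complex.ofReal_exp, Real.exp_log hr]
  have him : ζ.im = ψ := by simp [hζ_def]
  have key : ‖(F ∘ Complex.exp) ζ‖ ≤ C := by
    apply PhragmenLindelof.horizontal_strip
      (a := a₁) (b := a₂) (hd.comp Complex.differentiable_exp).diffContOnCl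
    · refine ⟨2, ?_, b, ?_⟩
      · rw [lt_div_iff₀ (by linarith)]; linarith
      · apply Asymptotics.IsBigO.of_bound B
        apply Filter.Eventually.of_forall
        intro w
        have h1 : ‖F (Complex.exp w)‖ ≤ B * Real.exp (b * Real.exp (2 * |w.re|)) := by
          refine (hgrowth _).trans ?_
          apply mul_le_mul_of_nonneg_left _ hB
          apply Real.exp_le_exp.mpr
          have : ‖Complex.exp w‖^2 = Real.exp (2 * w.re) := by
            rw [Complex.norm_exp, pow_two, ← Real.exp_add]; ring_nf
          rw [this]
          apply mul_le_mul_of_nonneg_left _ hb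
          exact Real.exp_le_exp.mpr (by cases abs_cases w.re <;> linarith)
        simpa [Real.norm_eq_abs, Real.abs_exp] using h1
    · intro w hwim
      have : Complex.exp w = ((Real.exp w.re : ℝ) : ℂ) * Complex.exp ((a₁:ℂ) * Complex.I) := by
        conv_lhs => rw [← Complex.re_add_im w]
        rw [Complex.exp_add, hwim, Complex.ofReal_exp]
      simpa [Function.comp, this] using h₁ (Real.exp w.re) (Real.exp_pos _)
    · intro w hwim
      have : Complex.exp w = ((Real.exp w.re : ℝ) : ℂ) * Complex.exp ((a₂:ℂ) * Complex.I) := by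
        conv_lhs => rw [← Complex.re_add_im w]
        rw [Complex.exp_add, hwim, Complex.ofReal_exp]
      simpa [Function.comp, this] using h₂ (Real.exp w.re) (Real.exp_pos _)
    · rw [him]; exact hψ₁
    · rw [him]; exact hψ₂
  rwa [Function.comp_apply, hexp] at key

lemma ray_shift {F : ℂ → ℂ} {C : ℝ} {a : ℝ}
    (h : ∀ t : ℝ, ‖F ((t:ℂ) * Complex.exp ((a:ℂ) * Complex.I))‖ ≤ C) :
    ∀ t : ℝ, ‖F ((t:ℂ) * Complex.exp (((a + π : ℝ):ℂ) * Complex.I))‖ ≤ C := by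
  intro t
  have : ((t:ℂ)) * Complex.exp (((a + π : ℝ):ℂ) * Complex.I)
      = ((-t : ℝ):ℂ) * Complex.exp ((a:ℂ) * Complex.I) := by
    push_cast
    rw [add_mul, Complex.exp_add, Complex.exp_pi_mul_I]
    ring
  rw [this]
  exact h (-t)


/-- The squared Fock-space norm `‖F‖²_{F_α} = (α/π) ∫_ℂ |F(z)|² e^{-α|z|²} dA(z)`. -/
noncomputable def fockNormSq (α : ℝ) (F : ℂ → ℂ) : ℝ :=
  (α / Real.pi) * ∫ z : ℂ, ‖F z‖ ^ 2 * Real.exp (-α * ‖z‖ ^ 2)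

/-- `F` belongs to the Fock space `F_α(ℂ)`: it is entire and has finite Fock norm. -/
def MemFock (α : ℝ) (F : ℂ → ℂ) : Prop :=
  Differentiable ℂ F ∧
    Integrable fun z : ℂ => ‖F z‖ ^ 2 * Real.exp (-α * ‖z‖ ^ 2)

/-- `Λ` is a Liouville set for `F_α(ℂ)`: every `F ∈ F_α(ℂ)` bounded on `Λ` is constant. -/
def IsLiouvilleSet (α : ℝ) (Λ : Set ℂ) : Prop :=
  ∀ F : ℂ → ℂ, MemFock α F → (∃ C : ℝ, ∀ z ∈ Λ, ‖F z‖ ≤ C) → ∃ c : ℂ, ∀ z, F z = c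

/-- Three distinct lines through the origin cutting the plane into six acute sectors
form a Liouville set for `F_α(ℂ)`. -/
theorem three_lines_liouville
    (α : ℝ) (hα : 0 < α) (θ₁ θ₂ θ₃ : ℝ)
    (h0 : 0 ≤ θ₁) (h12 : θ₁ < θ₂) (h23 : θ₂ < θ₃) (h3 : θ₃ < Real.pi)
    (a1 : θ₂ - θ₁ < Real.pi / 2) (a2 : θ₃ - θ₂ < Real.pi / 2)
    (a3 : Real.pi - (θ₃ - θ₁) < Real.pi / 2) :
    IsLiouvilleSet α
      ({z : ℂ | ∃ t : ℝ, z = (t : ℂ) * Complex.exp ((θ₁ : ℂ) * Complex.I)} ∪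
       {z : ℂ | ∃ t : ℝ, z = (t : ℂ) * Complex.exp ((θ₂ : ℂ) * Complex.I)} ∪
       {z : ℂ | ∃ t : ℝ, z = (t : ℂ) * Complex.exp ((θ₃ : ℂ) * Complex.I)}) := by
  intro F hF hbd
  obtain ⟨hd, hint⟩ := hF
  obtain ⟨C, hC⟩ := hbd
  obtain ⟨B, hB0, hgrow⟩ := fock_growth hα hd hint
  have hπ := Real.pi_pos
  -- boundary bounds on the three lines
  have h1 : ∀ t : ℝ, ‖F ((t:ℂ) * Complex.exp ((θ₁:ℂ) * Complex.I))‖ ≤ C :=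
    fun t => hC _ (Or.inl (Or.inl ⟨t, rfl⟩))
  have h2 : ∀ t : ℝ, ‖F ((t:ℂ) * Complex.exp ((θ₂:ℂ) * Complex.I))‖ ≤ C :=
    fun t => hC _ (Or.inl (Or.inr ⟨t, rfl⟩))
  have h3' : ∀ t : ℝ, ‖F ((t:ℂ) * Complex.exp ((θ₃:ℂ) * Complex.I))‖ ≤ C :=
    fun t => hC _ (Or.inr ⟨t, rfl⟩)
  have h4 := ray_shift h1   -- angle θ₁ + π
  have h5 := ray_shift h2   -- angle θ₂ + π
  have h6 := ray_shift h3'  -- angle θ₃ + π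
  have h7 : ∀ t : ℝ, ‖F ((t:ℂ) * Complex.exp (((θ₁ + 2*π : ℝ):ℂ) * Complex.I))‖ ≤ C := by
    have := ray_shift h4
    intro t
    have e : θ₁ + π + π = θ₁ + 2*π := by ring
    rw [show ((θ₁ + 2*π : ℝ):ℂ) = ((θ₁ + π + π : ℝ):ℂ) by norm_cast; linarith]
    exact this t
  -- global bound
  have hall : ∀ z : ℂ, ‖F z‖ ≤ C := by
    intro z
    rcases eq_or_ne z 0 with rfl | hz
    · simpa using h1 0
    · set r : ℝ := ‖z‖ with hr_def
      have hr : 0 < r := norm_pos_iff.mpr hz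
      set φ : ℝ := Complex.arg z with hφ_def
      have hφ1 : -π < φ := Complex.neg_pi_lt_arg z
      have hφ2 : φ ≤ π := Complex.arg_le_pi z
      set ψ : ℝ := if θ₁ ≤ φ then φ else φ + 2*π with hψ_def
      have hzψ : z = (r:ℂ) * Complex.exp ((ψ:ℂ) * Complex.I) := by
        rw [hψ_def]
        split_ifs
        · exact (Complex.norm_mul_exp_arg_mul_I z).symm
        · rw [show ((φ + 2*π : ℝ):ℂ) = (φ:ℂ) + 2*(π:ℂ) by push_cast; ring, add_mul,
            Complex.exp_add, Complex.exp_two_pi_mul_I, mul_one]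
          exact (Complex.norm_mul_exp_arg_mul_I z).symm
      have hψ1 : θ₁ ≤ ψ := by
        rw [hψ_def]; split_ifs with h
        · exact h
        · linarith
      have hψ2 : ψ ≤ θ₁ + 2*π := by
        rw [hψ_def]; split_ifs with h
        · linarith
        · linarith
      rw [hzψ]
      -- six sectors
      rcases le_or_gt ψ θ₂ with hc1 | hc1
      · exact sector_bound hd hB0.le hα.le hgrow h12 a1
          (fun t _ => h1 t) (fun t _ => h2 t) hr hψ1 hc1
      rcases le_or_gt ψ θ₃ with hc2 | hc2
      · exact sector_bound hd hB0.le hα.le hgrow h23 a2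
          (fun t _ => h2 t) (fun t _ => h3' t) hr hc1.le hc2
      rcases le_or_gt ψ (θ₁ + π) with hc3 | hc3
      · exact sector_bound hd hB0.le hα.le hgrow (by linarith) (by linarith [a3])
          (fun t _ => h3' t) (fun t _ => h4 t) hr hc2.le hc3
      rcases le_or_gt ψ (θ₂ + π) with hc4 | hc4
      · exact sector_bound hd hB0.le hα.le hgrow (by linarith) (by linarith)
          (fun t _ => h4 t) (fun t _ => h5 t) hr hc3.le hc4
      rcases le_or_gt ψ (θ₃ + π) with hc5 | hc5
      · exact sector_bound hd hB0.le hα.le hgrow (by linarith) (by linarith)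
          (fun t _ => h5 t) (fun t _ => h6 t) hr hc4.le hc5
      · exact sector_bound hd hB0.le hα.le hgrow (by linarith) (by linarith)
          (fun t _ => h6 t) (fun t _ => h7 t) hr hc5.le hψ2
  -- Liouville
  apply hd.exists_const_forall_eq_of_bounded
  apply Bornology.IsBounded.subset (Metric.isBounded_closedBall (x := (0:ℂ)) (r := C))
  rintro w ⟨z, rfl⟩
  simpa [Metric.mem_closedBall, dist_eq_norm] using hall z
end

section
/- Let α > 0 and let Λ ⊆ ℂ be a lattice with s(Λ) = π/α. Then Λ is not a Liouville set for the Fock space F_α(ℂ): there exists a nonconstant function F ∈ F_α(ℂ) that is bounded on Λ. -/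
open MeasureTheory Complex

/-- The lattice `{m·ω₁ + n·ω₂ : m, n ∈ ℤ}` generated by the periods `ω₁, ω₂`. -/
def latticeSet (ω₁ ω₂ : ℂ) : Set ℂ := {z : ℂ | ∃ m n : ℤ, z = (m : ℂ) * ω₁ + (n : ℂ) * ω₂}

set_option maxHeartbeats 1000000

namespace CLNL

/-- θ₂ vanishes at the half-period `(1+τ)/2`. -/
lemma theta_zero (τ : ℂ) : jacobiTheta₂ ((1 + τ) / 2) τ = 0 := by
  have h1 : jacobiTheta₂ ((1 + τ) / 2) τ = jacobiTheta₂ ((1 - τ) / 2) τ := by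
    rw [← jacobiTheta₂_neg_left ((1 + τ) / 2) τ,
      ← jacobiTheta₂_add_left (-((1 + τ) / 2)) τ]
    ring_nf
  have h2 : jacobiTheta₂ ((1 - τ) / 2 + τ) τ
      = cexp (-↑Real.pi * I * (τ + 2 * ((1 - τ) / 2))) * jacobiTheta₂ ((1 - τ) / 2) τ :=
    jacobiTheta₂_add_left' _ _
  have h3 : (1 - τ) / 2 + τ = (1 + τ) / 2 := by ring
  have h4 : (τ + 2 * ((1 - τ) / 2)) = 1 := by ring
  rw [h3, h4, mul_one] at h2
  have h5 : cexp (-↑Real.pi * I) = -1 := by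
    rw [show -(Real.pi : ℂ) * I = -(Real.pi * I) by ring, Complex.exp_neg,
      Complex.exp_pi_mul_I]
    norm_num
  rw [h5, ← h1] at h2
  linear_combination (1/2 : ℂ) * h2

/-- zeros of θ₂ propagate along `ℤτ`. -/
lemma theta_zero_tau_shift (z τ : ℂ) (h : jacobiTheta₂ z τ = 0) (n : ℤ) :
    jacobiTheta₂ (z + n * τ) τ = 0 := by
  induction n using Int.induction_on with
  | zero => simpa using h
  | succ k ih =>
      push_cast at ih ⊢
      have h2 := jacobiTheta₂_add_left' (z + (k:ℂ) * τ) τ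
      rw [ih, mul_zero] at h2
      rw [show z + ((k:ℂ) + 1) * τ = z + (k:ℂ) * τ + τ by ring, h2]
  | pred k ih =>
      push_cast at ih ⊢
      have h2 := jacobiTheta₂_add_left' (z + (-(k:ℂ) - 1) * τ) τ
      rw [show z + (-(k:ℂ) - 1) * τ + τ = z + -(k:ℂ) * τ by ring, ih] at h2
      exact (mul_eq_zero.mp h2.symm).resolve_left (Complex.exp_ne_zero _)

/-- zeros of θ₂ propagate along `ℤ + ℤτ`. -/
lemma theta_zero_shift (z τ : ℂ) (h : jacobiTheta₂ z τ = 0) (m n : ℤ) :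
    jacobiTheta₂ (z + m + n * τ) τ = 0 := by
  have per : Function.Periodic (jacobiTheta₂ · τ) 1 := fun x => jacobiTheta₂_add_left x τ
  have h2 := (per.int_mul m) (z + n * τ)
  simp only [mul_one] at h2
  rw [show z + ↑m + ↑n * τ = z + ↑n * τ + ↑m by ring, h2]
  exact theta_zero_tau_shift z τ h n

/-- somewhere, θ₂ is nonzero. -/
lemma theta_exists_ne_zero {τ : ℂ} (hτ : 0 < τ.im) : ∃ w : ℂ, jacobiTheta₂ w τ ≠ 0 := by
  by_contra hcon
  push_neg at hcon
  set μ : Measure ℝ := volume.restrict (Set.Ioc (0:ℝ) 1) with hμ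
  have hmeas : ∀ n : ℤ, Integrable (fun x : ℝ => jacobiTheta₂_term n (x : ℂ) τ) μ := by
    intro n
    apply Continuous.integrableOn_Ioc
    unfold jacobiTheta₂_term
    apply Complex.continuous_exp.comp
    fun_prop
  have hnorm : ∀ (n : ℤ) (x : ℝ), ‖jacobiTheta₂_term n (x : ℂ) τ‖
      = Real.exp (-Real.pi * n ^ 2 * τ.im) := by
    intro n x
    rw [norm_jacobiTheta₂_term]
    simp
  have hsum0 : Summable (fun n : ℤ => jacobiTheta₂_term n (0 : ℂ) τ) :=
    (summable_jacobiTheta₂_term_iff 0 τ).mpr hτ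
  have hsum : Summable (fun n : ℤ => ∫ x, ‖jacobiTheta₂_term n (x : ℂ) τ‖ ∂μ) := by
    have h8 : ∀ n : ℤ, (∫ x, ‖jacobiTheta₂_term n (x : ℂ) τ‖ ∂μ)
        = Real.exp (-Real.pi * n ^ 2 * τ.im) := by
      intro n
      have : (fun x : ℝ => ‖jacobiTheta₂_term n (x : ℂ) τ‖)
          = fun _ : ℝ => Real.exp (-Real.pi * n ^ 2 * τ.im) := funext fun x => hnorm n x
      rw [this, integral_const]
      simp [hμ]
    rw [funext h8]
    refine (summable_norm_iff.mpr hsum0).congr fun n => ?_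
    rw [norm_jacobiTheta₂_term]
    simp
  have hkey := integral_tsum_of_summable_integral_norm hmeas hsum
  have hz : ∀ x : ℝ, ∑' n : ℤ, jacobiTheta₂_term n (x : ℂ) τ = 0 := fun x => hcon x
  rw [show (fun x : ℝ => ∑' n : ℤ, jacobiTheta₂_term n (x : ℂ) τ) = fun _ => (0:ℂ) from
    funext hz] at hkey
  rw [integral_zero] at hkey
  have hint : ∀ n : ℤ, (∫ x, jacobiTheta₂_term n (x : ℂ) τ ∂μ)
      = if n = 0 then (1 : ℂ) else 0 := by
    intro n
    have heq : (∫ x, jacobiTheta₂_term n (x : ℂ) τ ∂μ)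
        = ∫ x in (0:ℝ)..1, jacobiTheta₂_term n (x : ℂ) τ :=
      (intervalIntegral.integral_of_le zero_le_one).symm
    rw [heq]
    rcases eq_or_ne n 0 with rfl | hn
    · simp [jacobiTheta₂_term]
    · have hterm : ∀ x : ℝ, jacobiTheta₂_term n (x : ℂ) τ
          = cexp (Real.pi * I * n ^ 2 * τ) * cexp ((2 * Real.pi * I * n) * (x : ℂ)) := by
        intro x
        rw [jacobiTheta₂_term, Complex.exp_add]
        ring_nf
      rw [intervalIntegral.integral_congr (fun x _ => hterm x),
        intervalIntegral.integral_const_mul]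
      have hc : (2 * (Real.pi : ℂ) * I * n) ≠ 0 := by
        simp [Real.pi_ne_zero, Complex.I_ne_zero, hn]
      rw [integral_exp_mul_complex hc]
      have h1 : cexp (2 * (Real.pi : ℂ) * I * n * (1:ℝ)) = 1 := by
        rw [show (2 * (Real.pi : ℂ) * I * n * (1:ℝ)) = n * (2 * Real.pi * I) by push_cast; ring]
        exact Complex.exp_int_mul_two_pi_mul_I n
      have h0 : cexp (2 * (Real.pi : ℂ) * I * n * (0:ℝ)) = 1 := by
        norm_num
      rw [h1, h0]
      simp [hn]
  rw [funext hint] at hkey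
  simp only [tsum_ite_eq] at hkey
  exact one_ne_zero hkey

noncomputable def Qf (α : ℝ) (ω₁ : ℂ) (z : ℂ) : ℂ :=
  (↑(α / (2 * normSq ω₁)) * (starRingEnd ℂ ω₁) ^ 2) * z ^ 2
    + (↑(Real.pi / normSq ω₁) * (I * starRingEnd ℂ ω₁)) * z

noncomputable def Gf (α : ℝ) (ω₁ ω₂ : ℂ) (z : ℂ) : ℂ :=
  cexp (Qf α ω₁ z) * jacobiTheta₂ (z / ω₁ + (1 + ω₂ / ω₁) / 2) (ω₂ / ω₁)

lemma Gf_diff (α : ℝ) {ω₁ ω₂ : ℂ} (hor : 0 < (ω₂ / ω₁).im) :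
    Differentiable ℂ (Gf α ω₁ ω₂) := by
  apply Differentiable.mul
  · apply Complex.differentiable_exp.comp
    unfold Qf
    fun_prop
  · intro z
    have h := differentiableAt_jacobiTheta₂_fst (z / ω₁ + (1 + ω₂ / ω₁) / 2) hor
    apply DifferentiableAt.comp (g := fun w => jacobiTheta₂ w (ω₂ / ω₁)) z h
    fun_prop

lemma Gf_lattice_zero (α : ℝ) {ω₁ : ℂ} (ω₂ : ℂ) (h₁ : ω₁ ≠ 0) (m n : ℤ) :
    Gf α ω₁ ω₂ ((m : ℂ) * ω₁ + (n : ℂ) * ω₂) = 0 := by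
  have harg : ((m : ℂ) * ω₁ + (n : ℂ) * ω₂) / ω₁ + (1 + ω₂ / ω₁) / 2
      = (1 + ω₂ / ω₁) / 2 + (m : ℂ) + (n : ℂ) * (ω₂ / ω₁) := by
    field_simp
    ring
  rw [Gf, harg, theta_zero_shift _ _ (theta_zero (ω₂ / ω₁)) m n, mul_zero]

lemma re_identity_one (α : ℝ) {ω₁ : ℂ} (h₁ : ω₁ ≠ 0) (z : ℂ) :
    2 * (Qf α ω₁ (z + ω₁)).re - α * normSq (z + ω₁)
      = 2 * (Qf α ω₁ z).re - α * normSq z := by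
  have hns : normSq ω₁ ≠ 0 := by simpa using h₁
  have hS : normSq ω₁ = ω₁.re ^ 2 + ω₁.im ^ 2 := by rw [normSq_apply]; ring
  simp only [Qf, Complex.normSq_add, add_re, mul_re, mul_im, ofReal_re, ofReal_im, I_re, I_im,
    conj_re, conj_im, pow_two, add_im, sub_re, sub_im, zero_mul, one_mul, zero_sub, sub_zero,
    mul_zero, zero_add, add_zero, neg_mul, neg_neg, mul_neg]
  field_simp
  rw [hS]
  ring

lemma re_identity_two (α : ℝ) {ω₁ ω₂ : ℂ} (h₁ : ω₁ ≠ 0) (z : ℂ)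
    (hπ : Real.pi = α * (ω₁.re * ω₂.im - ω₁.im * ω₂.re)) :
    2 * ((Qf α ω₁ (z + ω₂)).re
        + (-(Real.pi : ℂ) * I * (1 + 2 * (z / ω₁) + 2 * (ω₂ / ω₁))).re)
      - α * normSq (z + ω₂)
      = 2 * (Qf α ω₁ z).re - α * normSq z := by
  have hns : normSq ω₁ ≠ 0 := by simpa using h₁
  have hS : normSq ω₁ = ω₁.re ^ 2 + ω₁.im ^ 2 := by rw [normSq_apply]; ring
  simp only [Qf]
  rw [hπ]
  simp only [Complex.normSq_add, add_re, mul_re, mul_im, ofReal_re, ofReal_im, I_re, I_im,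
    conj_re, conj_im, pow_two, add_im, sub_re, sub_im, zero_mul, one_mul, zero_sub, sub_zero,
    mul_zero, zero_add, add_zero, neg_mul, neg_neg, mul_neg, div_re, div_im, one_re, one_im,
    neg_re, neg_im, ofReal_mul, ofReal_sub, re_ofNat, im_ofNat]
  have hS2 : normSq ω₂ = ω₂.re ^ 2 + ω₂.im ^ 2 := by rw [normSq_apply]; ring
  field_simp
  rw [hS, hS2]
  ring

lemma aux_exp (N q r : ℝ) :
    (Real.exp q * N) ^ 2 * Real.exp r = N ^ 2 * Real.exp (2 * q + r) := by
  calc (Real.exp q * N) ^ 2 * Real.exp r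
      = N ^ 2 * (Real.exp q * Real.exp q * Real.exp r) := by ring
    _ = N ^ 2 * Real.exp (2 * q + r) := by
        rw [← Real.exp_add, ← Real.exp_add]; ring_nf

lemma aux_exp' (N a b r : ℝ) :
    (Real.exp a * (Real.exp b * N)) ^ 2 * Real.exp r
      = N ^ 2 * Real.exp (2 * (a + b) + r) := by
  calc (Real.exp a * (Real.exp b * N)) ^ 2 * Real.exp r
      = N ^ 2 * (Real.exp a * Real.exp a * (Real.exp b * Real.exp b) * Real.exp r) := by ring
    _ = N ^ 2 * Real.exp (2 * (a + b) + r) := by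
        rw [← Real.exp_add, ← Real.exp_add, ← Real.exp_add, ← Real.exp_add]; ring_nf

/-- `‖Gf‖² e^{-α|z|²}` as a nice expression. -/
lemma Hf_formula (α : ℝ) (ω₁ ω₂ : ℂ) (z : ℂ) :
    ‖Gf α ω₁ ω₂ z‖ ^ 2 * Real.exp (-α * ‖z‖ ^ 2)
      = ‖jacobiTheta₂ (z / ω₁ + (1 + ω₂ / ω₁) / 2) (ω₂ / ω₁)‖ ^ 2
        * Real.exp (2 * (Qf α ω₁ z).re + -α * normSq z) := by
  rw [Gf, norm_mul, Complex.norm_exp,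
    Complex.sq_norm z, aux_exp]

lemma Hf_per1 (α : ℝ) {ω₁ ω₂ : ℂ} (h₁ : ω₁ ≠ 0) (z : ℂ) :
    ‖Gf α ω₁ ω₂ (z + ω₁)‖ ^ 2 * Real.exp (-α * ‖z + ω₁‖ ^ 2)
      = ‖Gf α ω₁ ω₂ z‖ ^ 2 * Real.exp (-α * ‖z‖ ^ 2) := by
  have ha : (z + ω₁) / ω₁ + (1 + ω₂ / ω₁) / 2 = (z / ω₁ + (1 + ω₂ / ω₁) / 2) + 1 := by
    field_simp
    ring
  have hG : Gf α ω₁ ω₂ (z + ω₁) = cexp (Qf α ω₁ (z + ω₁))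
      * jacobiTheta₂ (z / ω₁ + (1 + ω₂ / ω₁) / 2) (ω₂ / ω₁) := by
    rw [Gf, ha, jacobiTheta₂_add_left]
  rw [show ‖Gf α ω₁ ω₂ (z + ω₁)‖ ^ 2 * Real.exp (-α * ‖z + ω₁‖ ^ 2)
      = ‖jacobiTheta₂ (z / ω₁ + (1 + ω₂ / ω₁) / 2) (ω₂ / ω₁)‖ ^ 2
        * Real.exp (2 * (Qf α ω₁ (z + ω₁)).re + -α * normSq (z + ω₁)) from by
      rw [hG, norm_mul, Complex.norm_exp,
        Complex.sq_norm (z + ω₁), aux_exp],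
    Hf_formula]
  have hre := re_identity_one α h₁ z
  congr 1
  rw [Real.exp_eq_exp]
  ring_nf
  ring_nf at hre
  linarith

lemma Hf_per2 (α : ℝ) {ω₁ ω₂ : ℂ} (h₁ : ω₁ ≠ 0) (z : ℂ)
    (hπ : Real.pi = α * (ω₁.re * ω₂.im - ω₁.im * ω₂.re)) :
    ‖Gf α ω₁ ω₂ (z + ω₂)‖ ^ 2 * Real.exp (-α * ‖z + ω₂‖ ^ 2)
      = ‖Gf α ω₁ ω₂ z‖ ^ 2 * Real.exp (-α * ‖z‖ ^ 2) := by
  have ha : (z + ω₂) / ω₁ + (1 + ω₂ / ω₁) / 2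
      = (z / ω₁ + (1 + ω₂ / ω₁) / 2) + ω₂ / ω₁ := by
    field_simp
    ring
  have hexp : -(Real.pi : ℂ) * I * (ω₂ / ω₁ + 2 * (z / ω₁ + (1 + ω₂ / ω₁) / 2))
      = -(Real.pi : ℂ) * I * (1 + 2 * (z / ω₁) + 2 * (ω₂ / ω₁)) := by ring
  have hG : Gf α ω₁ ω₂ (z + ω₂) = cexp (Qf α ω₁ (z + ω₂))
      * (cexp (-(Real.pi : ℂ) * I * (1 + 2 * (z / ω₁) + 2 * (ω₂ / ω₁)))
        * jacobiTheta₂ (z / ω₁ + (1 + ω₂ / ω₁) / 2) (ω₂ / ω₁)) := by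
    rw [Gf, ha, jacobiTheta₂_add_left', ← hexp]
  rw [show ‖Gf α ω₁ ω₂ (z + ω₂)‖ ^ 2 * Real.exp (-α * ‖z + ω₂‖ ^ 2)
      = ‖jacobiTheta₂ (z / ω₁ + (1 + ω₂ / ω₁) / 2) (ω₂ / ω₁)‖ ^ 2
        * Real.exp (2 * ((Qf α ω₁ (z + ω₂)).re
            + (-(Real.pi : ℂ) * I * (1 + 2 * (z / ω₁) + 2 * (ω₂ / ω₁))).re)
          + -α * normSq (z + ω₂)) from by
      rw [hG, norm_mul, norm_mul,
        Complex.norm_exp, Complex.norm_exp,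
        Complex.sq_norm (z + ω₂), aux_exp'],
    Hf_formula]
  have hre := re_identity_two α h₁ z hπ
  congr 1
  rw [Real.exp_eq_exp]
  ring_nf
  ring_nf at hre
  linarith

/-- a continuous doubly periodic function is bounded above. -/
lemma bounded_of_double_periodic {ω₁ ω₂ : ℂ} (h₁ : ω₁ ≠ 0) (hor : 0 < (ω₂ / ω₁).im)
    {f : ℂ → ℝ} (hf : Continuous f) (p1 : ∀ z, f (z + ω₁) = f z) (p2 : ∀ z, f (z + ω₂) = f z) :
    ∃ M : ℝ, ∀ z, f z ≤ M := by
  set τ : ℂ := ω₂ / ω₁ with hτ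
  set K : Set ℂ := (fun p : ℝ × ℝ => (p.1 : ℂ) * ω₁ + (p.2 : ℂ) * ω₂) ''
      (Set.Icc 0 1 ×ˢ Set.Icc 0 1) with hKdef
  have hK : IsCompact K :=
    (isCompact_Icc.prod isCompact_Icc).image (by fun_prop)
  have hne : K.Nonempty := ⟨(0 : ℝ) * ω₁ + (0 : ℝ) * ω₂, ⟨(0, 0), by simp, rfl⟩⟩
  obtain ⟨x₀, _, hmax⟩ := hK.exists_isMaxOn hne hf.continuousOn
  refine ⟨f x₀, fun z => ?_⟩
  have hτim : τ.im ≠ 0 := ne_of_gt hor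
  set t : ℝ := (z / ω₁).im / τ.im with ht
  set s : ℝ := (z / ω₁).re - t * τ.re with hs
  have hdecomp : z = (s : ℂ) * ω₁ + (t : ℂ) * ω₂ := by
    have h5 : ((s : ℂ) + (t : ℂ) * τ) = z / ω₁ := by
      apply Complex.ext
      · simp [hs, mul_re, ofReal_re, ofReal_im]
      · simp only [add_im, ofReal_im, mul_im, ofReal_re, zero_mul, add_zero, zero_add, ht]
        field_simp
    calc z = (z / ω₁) * ω₁ := by field_simp
      _ = ((s : ℂ) + (t : ℂ) * τ) * ω₁ := by rw [h5]
      _ = (s : ℂ) * ω₁ + (t : ℂ) * ω₂ := by rw [hτ]; field_simp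
  have per1 : Function.Periodic f ω₁ := p1
  have per2 : Function.Periodic f ω₂ := p2
  set w : ℂ := ((Int.fract s : ℝ) : ℂ) * ω₁ + ((Int.fract t : ℝ) : ℂ) * ω₂ with hw
  have key : f z = f w := by
    have hzw : z = w + (⌊s⌋ : ℂ) * ω₁ + (⌊t⌋ : ℂ) * ω₂ := by
      rw [hdecomp, hw, ← Int.self_sub_floor s, ← Int.self_sub_floor t]
      push_cast
      ring
    rw [hzw, (per2.int_mul ⌊t⌋) (w + (⌊s⌋ : ℂ) * ω₁), (per1.int_mul ⌊s⌋) w]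
  rw [key]
  refine hmax ⟨(Int.fract s, Int.fract t),
    ⟨⟨⟨Int.fract_nonneg s, (Int.fract_lt_one s).le⟩,
      ⟨Int.fract_nonneg t, (Int.fract_lt_one t).le⟩⟩, by rw [hw]⟩⟩

lemma dslope_differentiable {f : ℂ → ℂ} (hf : Differentiable ℂ f) (a : ℂ) :
    Differentiable ℂ (dslope f a) := by
  intro z
  rcases eq_or_ne z a with rfl | hz
  · obtain ⟨p, hp⟩ := hf.analyticAt z
    exact hp.has_fpower_series_dslope_fslope.differentiableAt
  · exact (differentiableAt_dslope_of_ne hz).mpr (hf z)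

lemma dslope_eq {f : ℂ → ℂ} {a b : ℂ} (ha : f a = 0) (h : b ≠ a) :
    dslope f a b = f b / (b - a) := by
  rw [dslope_of_ne f h, slope_def_field, ha, sub_zero]

end CLNL

open CLNL in
/-- A lattice at the critical density `s(Λ) = π/α` is not a Liouville set for `F_α(ℂ)`:
there is a nonconstant `F ∈ F_α(ℂ)` bounded on the lattice. -/
theorem critical_lattice_not_liouville
    (α : ℝ) (hα : 0 < α) (ω₁ ω₂ : ℂ) (h₁ : ω₁ ≠ 0) (h₂ : ω₂ ≠ 0)
    (hor : 0 < (ω₂ / ω₁).im)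
    (hs : ((starRingEnd ℂ) ω₁ * ω₂).im = Real.pi / α) :
    ∃ F : ℂ → ℂ, MemFock α F ∧
      (∃ C : ℝ, ∀ z ∈ latticeSet ω₁ ω₂, ‖F z‖ ≤ C) ∧
      ¬∃ c : ℂ, ∀ z, F z = c := by
  have hπ : Real.pi = α * (ω₁.re * ω₂.im - ω₁.im * ω₂.re) := by
    have : ((starRingEnd ℂ) ω₁ * ω₂).im = ω₁.re * ω₂.im - ω₁.im * ω₂.re := by
      simp only [mul_im, conj_re, conj_im]
      ring
    rw [this] at hs
    field_simp at hs
    linarith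
  set G : ℂ → ℂ := Gf α ω₁ ω₂ with hGdef
  have hG : Differentiable ℂ G := Gf_diff α hor
  have hG0 : G 0 = 0 := by
    rw [hGdef]
    simpa using Gf_lattice_zero α ω₂ h₁ 0 0
  have hGω : G ω₁ = 0 := by
    rw [hGdef]
    simpa using Gf_lattice_zero α ω₂ h₁ 1 0
  set G₁ : ℂ → ℂ := dslope G 0 with hG₁def
  have hG₁ : Differentiable ℂ G₁ := dslope_differentiable hG 0
  have hG₁ω : G₁ ω₁ = 0 := by
    rw [hG₁def, dslope_eq hG0 h₁, hGω, zero_div]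
  set F : ℂ → ℂ := dslope G₁ ω₁ with hFdef
  have hF : Differentiable ℂ F := dslope_differentiable hG₁ ω₁
  have hFval : ∀ z : ℂ, z ≠ 0 → z ≠ ω₁ → F z = G z / (z * (z - ω₁)) := by
    intro z hz0 hzω
    rw [hFdef, dslope_eq hG₁ω hzω, hG₁def, dslope_eq hG0 hz0, sub_zero, div_div]
  -- the doubly periodic majorant
  set f : ℂ → ℝ := fun z => ‖G z‖ ^ 2 * Real.exp (-α * ‖z‖ ^ 2) with hfdef
  have hfc : Continuous f := by
    apply Continuous.mul
    · exact (hG.continuous.norm).pow 2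
    · exact Real.continuous_exp.comp (by fun_prop)
  have hfnonneg : ∀ z, 0 ≤ f z := fun z => by positivity
  obtain ⟨M, hM⟩ := bounded_of_double_periodic h₁ hor hfc
    (fun z => Hf_per1 α h₁ z) (fun z => Hf_per2 α h₁ z hπ)
  have hM0 : 0 ≤ M := le_trans (hfnonneg 0) (hM 0)
  -- continuity of the integrand
  set g : ℂ → ℝ := fun z => ‖F z‖ ^ 2 * Real.exp (-α * ‖z‖ ^ 2) with hgdef
  have hgc : Continuous g := by
    apply Continuous.mul
    · exact (hF.continuous.norm).pow 2
    · exact Real.continuous_exp.comp (by fun_prop)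
  have hgnonneg : ∀ z, 0 ≤ g z := fun z => by positivity
  set R : ℝ := 2 * ‖ω₁‖ + 2 with hRdef
  have hR2 : 2 ≤ R := by
    rw [hRdef]
    linarith [norm_nonneg ω₁]
  obtain ⟨M₂, hM₂⟩ := (isCompact_closedBall (0:ℂ) R).exists_bound_of_continuousOn
    hgc.continuousOn
  have hM₂0 : 0 ≤ M₂ := le_trans (norm_nonneg _) (hM₂ 0 (by
    simp only [Metric.mem_closedBall, dist_zero_right, norm_zero]; linarith))
  set C₁ : ℝ := max (64 * M) (M₂ * (1 + R) ^ 4) with hC₁def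
  have hbnd : ∀ z : ℂ, g z ≤ C₁ / (1 + ‖z‖) ^ 4 := by
    intro z
    have hP : (0:ℝ) < (1 + ‖z‖) ^ 4 := by positivity
    rw [le_div_iff₀ hP]
    by_cases hz : ‖z‖ ≤ R
    · have h9 : g z ≤ M₂ := by
        have := hM₂ z (by simpa [Metric.mem_closedBall, dist_zero_right] using hz)
        calc g z ≤ ‖g z‖ := le_abs_self _
          _ ≤ M₂ := this
      calc g z * (1 + ‖z‖) ^ 4 ≤ M₂ * (1 + R) ^ 4 := by
            apply mul_le_mul h9 _ (by positivity) hM₂0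
            have := norm_nonneg z
            apply pow_le_pow_left₀ (by linarith) (by linarith)
        _ ≤ C₁ := le_max_right _ _
    · push_neg at hz
      have hz1 : 1 ≤ ‖z‖ := by linarith
      have hzω₁ : ‖z‖ ≥ 2 * ‖ω₁‖ + 2 := le_of_lt hz
      have hz0 : z ≠ 0 := by
        intro h; rw [h, norm_zero] at hz1; linarith
      have hzω : z ≠ ω₁ := by
        intro h
        rw [h] at hzω₁
        have := norm_nonneg ω₁
        linarith
      have hd1 : (1 + ‖z‖) / 2 ≤ ‖z‖ := by linarith
      have hd2 : (1 + ‖z‖) / 4 ≤ ‖z - ω₁‖ := by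
        have := norm_sub_norm_le z ω₁
        have h10 : ‖z‖ - ‖ω₁‖ ≤ ‖z - ω₁‖ := by
          calc ‖z‖ - ‖ω₁‖ ≤ |‖z‖ - ‖ω₁‖| := le_abs_self _
            _ ≤ ‖z - ω₁‖ := abs_norm_sub_norm_le z ω₁
        linarith
      have hgz : g z = f z / (‖z‖ * ‖z - ω₁‖) ^ 2 := by
        rw [hgdef]
        simp only
        rw [hFval z hz0 hzω, norm_div, norm_mul, div_pow, hfdef]
        ring
      have hden : (1 + ‖z‖) ^ 4 / 64 ≤ (‖z‖ * ‖z - ω₁‖) ^ 2 := by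
        have h11 : (1 + ‖z‖) / 2 * ((1 + ‖z‖) / 4) ≤ ‖z‖ * ‖z - ω₁‖ := by
          apply mul_le_mul hd1 hd2 (by positivity) (norm_nonneg _)
        calc (1 + ‖z‖) ^ 4 / 64 = ((1 + ‖z‖) / 2 * ((1 + ‖z‖) / 4)) ^ 2 := by ring
          _ ≤ (‖z‖ * ‖z - ω₁‖) ^ 2 := by
              apply pow_le_pow_left₀ (by positivity) h11
      have hdenpos : (0:ℝ) < (1 + ‖z‖) ^ 4 / 64 := by positivity
      calc g z * (1 + ‖z‖) ^ 4 = f z / (‖z‖ * ‖z - ω₁‖) ^ 2 * (1 + ‖z‖) ^ 4 := by rw [hgz]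
        _ ≤ M / ((1 + ‖z‖) ^ 4 / 64) * (1 + ‖z‖) ^ 4 := by
            apply mul_le_mul_of_nonneg_right _ (by positivity)
            apply div_le_div₀ (hM0) (hM z) hdenpos hden
        _ = 64 * M := by field_simp
        _ ≤ C₁ := le_max_left _ _
  -- integrability
  have hint0 : Integrable (fun z : ℂ => (1 + ‖z‖) ^ (-(4:ℝ))) (volume : Measure ℂ) := by
    apply integrable_one_add_norm
    rw [Complex.finrank_real_complex]
    norm_num
  have hint1 : Integrable (fun z : ℂ => C₁ / (1 + ‖z‖) ^ 4) (volume : Measure ℂ) := by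
    have heq : (fun z : ℂ => C₁ / (1 + ‖z‖) ^ 4)
        = fun z : ℂ => C₁ * (1 + ‖z‖) ^ (-(4:ℝ)) := by
      funext z
      have h12 : (0:ℝ) < 1 + ‖z‖ := by positivity
      rw [Real.rpow_neg h12.le, show ((4:ℝ)) = ((4:ℕ):ℝ) by norm_num,
        Real.rpow_natCast, div_eq_mul_inv]
    rw [heq]
    exact hint0.const_mul C₁
  have hintg : Integrable g (volume : Measure ℂ) := by
    apply Integrable.mono' hint1 hgc.aestronglyMeasurable
    filter_upwards with z
    rw [Real.norm_of_nonneg (hgnonneg z)]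
    exact hbnd z
  refine ⟨F, ⟨hF, hintg⟩, ⟨‖F 0‖ + ‖F ω₁‖, ?_⟩, ?_⟩
  · rintro z ⟨m, n, rfl⟩
    by_cases hz0 : (m : ℂ) * ω₁ + (n : ℂ) * ω₂ = 0
    · rw [hz0]
      have := norm_nonneg (F ω₁)
      linarith [le_refl ‖F 0‖]
    by_cases hzω : (m : ℂ) * ω₁ + (n : ℂ) * ω₂ = ω₁
    · rw [hzω]
      have := norm_nonneg (F 0)
      linarith [le_refl ‖F ω₁‖]
    · rw [hFval _ hz0 hzω, hGdef, Gf_lattice_zero α ω₂ h₁ m n, zero_div, norm_zero]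
      have := norm_nonneg (F 0)
      have := norm_nonneg (F ω₁)
      linarith
  · rintro ⟨cst, hcst⟩
    have h2ω : F (2 * ω₁) = 0 := by
      have hne0 : (2 : ℂ) * ω₁ ≠ 0 := mul_ne_zero two_ne_zero h₁
      have hneω : (2 : ℂ) * ω₁ ≠ ω₁ := by
        intro h
        apply h₁
        have : (2 : ℂ) * ω₁ - ω₁ = 0 := by rw [h]; ring
        calc ω₁ = 2 * ω₁ - ω₁ := by ring
          _ = 0 := this
      rw [hFval _ hne0 hneω]
      have : G (2 * ω₁) = 0 := by
        rw [hGdef]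
        simpa using Gf_lattice_zero α ω₂ h₁ 2 0
      rw [this, zero_div]
    obtain ⟨w, hw⟩ := theta_exists_ne_zero hor
    set zs : ℂ := (w - (1 + ω₂ / ω₁) / 2) * ω₁ with hzs
    have harg : zs / ω₁ + (1 + ω₂ / ω₁) / 2 = w := by
      rw [hzs]
      field_simp
      ring
    have hGzs : G zs ≠ 0 := by
      rw [hGdef, Gf, harg]
      exact mul_ne_zero (Complex.exp_ne_zero _) hw
    have hzs0 : zs ≠ 0 := by
      intro h
      rw [h] at hGzs
      exact hGzs hG0
    have hzsω : zs ≠ ω₁ := by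
      intro h
      rw [h] at hGzs
      exact hGzs hGω
    have hFzs : F zs ≠ 0 := by
      rw [hFval _ hzs0 hzsω]
      exact div_ne_zero hGzs (mul_ne_zero hzs0 (sub_ne_zero.mpr hzsω))
    apply hFzs
    rw [hcst zs, ← hcst (2 * ω₁), h2ω]
end

section
/- Let α > 0, let Λ ⊆ ℂ be a uniqueness set for the Fock space F_α(ℂ), and let F, H ∈ F_α(ℂ). If |F(λ)| = |H(λ)| for all λ ∈ Λ and the entire function G := F·H·(F·H' − F'·H) vanishes identically, then there exists τ ∈ ℂ with |τ| = 1 such that F = τ·H. -/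
open MeasureTheory Complex

/-- `Λ` is a uniqueness set for `F_α(ℂ)`: the only function in `F_α(ℂ)` vanishing
identically on `Λ` is the zero function. -/
def IsUniquenessSet (α : ℝ) (Λ : Set ℂ) : Prop :=
  ∀ F : ℂ → ℂ, MemFock α F → (∀ z ∈ Λ, F z = 0) → ∀ z, F z = 0

/-- Entire functions form an integral domain: if a product of two entire functions
vanishes identically, one of the factors vanishes identically. -/
lemma entire_mul_eq_zero {f g : ℂ → ℂ} (hf : Differentiable ℂ f) (hg : Differentiable ℂ g)
    (h : ∀ z, f z * g z = 0) : (∀ z, f z = 0) ∨ (∀ z, g z = 0) := by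
  by_cases hf0 : ∀ z, f z = 0
  · exact Or.inl hf0
  push_neg at hf0
  obtain ⟨z₀, hz₀⟩ := hf0
  right
  have hne : ∀ᶠ z in nhds z₀, f z ≠ 0 :=
    hf.continuous.continuousAt.eventually_ne hz₀
  have hg0 : g =ᶠ[nhds z₀] (fun _ => (0 : ℂ)) := by
    filter_upwards [hne] with z hz
    have := h z
    exact (mul_eq_zero.mp this).resolve_left hz
  have hganal : AnalyticOnNhd ℂ g Set.univ :=
    analyticOnNhd_univ_iff_differentiable.mpr hg
  have hzero : AnalyticOnNhd ℂ (fun _ : ℂ => (0 : ℂ)) Set.univ :=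
    fun _ _ => analyticAt_const
  have := hganal.eq_of_eventuallyEq hzero hg0
  intro z
  exact congrFun this z

/-- If the Wronskian of two entire functions vanishes identically and `H z₀ ≠ 0`,
then `F = (F z₀ / H z₀) • H` everywhere. -/
lemma entire_wronskian_zero {F H : ℂ → ℂ} (hF : Differentiable ℂ F) (hH : Differentiable ℂ H)
    (hW : ∀ z, F z * deriv H z - deriv F z * H z = 0) {z₀ : ℂ} (hz₀ : H z₀ ≠ 0) :
    ∀ z, F z = (F z₀ / H z₀) * H z := by
  set c : ℂ := F z₀ / H z₀ with hc
  have hne : ∀ᶠ z in nhds z₀, H z ≠ 0 :=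
    hH.continuous.continuousAt.eventually_ne hz₀
  obtain ⟨r, hr, hball⟩ := Metric.eventually_nhds_iff_ball.mp hne
  set q : ℂ → ℂ := fun z => F z / H z with hq
  have hderiv : ∀ z ∈ Metric.ball z₀ r, HasDerivAt q 0 z := by
    intro z hz
    have hHz := hball z hz
    have h1 : HasDerivAt F (deriv F z) z := (hF z).hasDerivAt
    have h2 : HasDerivAt H (deriv H z) z := (hH z).hasDerivAt
    have := h1.div h2 hHz
    have hnum : deriv F z * H z - F z * deriv H z = 0 := by
      have := hW z; ring_nf; ring_nf at this; linear_combination -this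
    rwa [hnum, zero_div] at this
  have hdiffOn : DifferentiableOn ℂ q (Metric.ball z₀ r) := fun z hz =>
    ((hderiv z hz).differentiableAt).differentiableWithinAt
  have hfd : ∀ z ∈ Metric.ball z₀ r, fderivWithin ℂ q (Metric.ball z₀ r) z = 0 := by
    intro z hz
    rw [fderivWithin_of_isOpen Metric.isOpen_ball hz]
    have : HasFDerivAt q ((1 : ℂ →L[ℂ] ℂ).smulRight (0 : ℂ)) z := (hderiv z hz).hasFDerivAt
    rw [this.fderiv]
    ext x; simp
  have hz₀mem : z₀ ∈ Metric.ball z₀ r := Metric.mem_ball_self hr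
  have hconst : ∀ z ∈ Metric.ball z₀ r, q z = q z₀ := fun z hz =>
    (convex_ball z₀ r).is_const_of_fderivWithin_eq_zero hdiffOn hfd hz hz₀mem
  -- so F = c * H on the ball
  have hev : (fun z => F z - c * H z) =ᶠ[nhds z₀] (fun _ => (0 : ℂ)) := by
    filter_upwards [Metric.eventually_nhds_iff_ball.mpr ⟨r, hr, fun z hz => hconst z hz⟩,
      Metric.eventually_nhds_iff_ball.mpr ⟨r, hr, hball⟩] with z hz hHz
    have hqz : F z / H z = c := hz
    rw [← hqz]
    field_simp
    ring
  have hanal : AnalyticOnNhd ℂ (fun z => F z - c * H z) Set.univ :=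
    analyticOnNhd_univ_iff_differentiable.mpr (hF.sub ((differentiable_const c).mul hH))
  have hzero : AnalyticOnNhd ℂ (fun _ : ℂ => (0 : ℂ)) Set.univ := fun _ _ => analyticAt_const
  have := hanal.eq_of_eventuallyEq hzero hev
  intro z
  have hz := congrFun this z
  exact sub_eq_zero.mp hz

/-- **Proposition.** If `Λ` is a uniqueness set for `F_α(ℂ)`, `|F| = |H|` on `Λ`, and
`G = FH(FH' − F'H)` vanishes identically, then `F = τH` for a unimodular `τ`. -/
theorem phase_retrieval_criterion
    (α : ℝ) (hα : 0 < α) (Λ : Set ℂ) (hΛ : IsUniquenessSet α Λ)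
    (F H : ℂ → ℂ) (hF : MemFock α F) (hH : MemFock α H)
    (habs : ∀ w ∈ Λ, ‖F w‖ = ‖H w‖)
    (hG : ∀ z : ℂ, F z * H z * (F z * deriv H z - deriv F z * H z) = 0) :
    ∃ τ : ℂ, ‖τ‖ = 1 ∧ ∀ z, F z = τ * H z := by
  have hFd := hF.1
  have hHd := hH.1
  -- If H vanishes identically, so does F (via the uniqueness set), and τ = 1 works.
  have hHcase : (∀ z, H z = 0) → ∃ τ : ℂ, ‖τ‖ = 1 ∧ ∀ z, F z = τ * H z := by
    intro hH0
    have hFΛ : ∀ z ∈ Λ, F z = 0 := by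
      intro w hw
      have : ‖F w‖ = 0 := by rw [habs w hw, hH0 w, norm_zero]
      simpa using this
    have hF0 := hΛ F hF hFΛ
    exact ⟨1, by simp, fun z => by rw [hF0 z, hH0 z, mul_zero]⟩
  -- Similarly if F vanishes identically, so does H, and τ = 1 works.
  have hFcase : (∀ z, F z = 0) → ∃ τ : ℂ, ‖τ‖ = 1 ∧ ∀ z, F z = τ * H z := by
    intro hF0
    have hHΛ : ∀ z ∈ Λ, H z = 0 := by
      intro w hw
      have : ‖H w‖ = 0 := by rw [← habs w hw, hF0 w, norm_zero]
      simpa using this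
    have hH0 := hΛ H hH hHΛ
    exact ⟨1, by simp, fun z => by rw [hF0 z, hH0 z, mul_zero]⟩
  -- Split the product G = (F·H)·W into factors.
  have hW : Differentiable ℂ fun z => F z * deriv H z - deriv F z * H z := by
    have hHd' : Differentiable ℂ (deriv H) :=
      analyticOnNhd_univ_iff_differentiable.mp
        ((analyticOnNhd_univ_iff_differentiable.mpr hHd).deriv)
    have hFd' : Differentiable ℂ (deriv F) :=
      analyticOnNhd_univ_iff_differentiable.mp
        ((analyticOnNhd_univ_iff_differentiable.mpr hFd).deriv)
    exact (hFd.mul hHd').sub (hFd'.mul hHd)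
  rcases entire_mul_eq_zero (hFd.mul hHd) hW hG with hFH | hWzero
  · rcases entire_mul_eq_zero hFd hHd hFH with hF0 | hH0
    · exact hFcase hF0
    · exact hHcase hH0
  · by_cases hH0 : ∀ z, H z = 0
    · exact hHcase hH0
    push_neg at hH0
    obtain ⟨z₀, hz₀⟩ := hH0
    have hprop := entire_wronskian_zero hFd hHd hWzero hz₀
    set c : ℂ := F z₀ / H z₀ with hc
    -- There must be a point of Λ where H is nonzero, else H ≡ 0.
    by_cases hΛH : ∀ w ∈ Λ, H w = 0
    · exact absurd (hΛ H hH hΛH z₀) hz₀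
    push_neg at hΛH
    obtain ⟨w, hwΛ, hwne⟩ := hΛH
    have hnorm : ‖F w‖ = ‖c‖ * ‖H w‖ := by rw [hprop w, norm_mul]
    have habsw := habs w hwΛ
    have hcnorm : ‖c‖ = 1 := by
      have hHw : ‖H w‖ ≠ 0 := norm_ne_zero_iff.mpr hwne
      rw [habsw] at hnorm
      have : ‖c‖ * ‖H w‖ = 1 * ‖H w‖ := by linarith
      exact mul_right_cancel₀ hHw this
    exact ⟨c, hcnorm, hprop⟩
end

section
/- Let α > 0, let Λ ⊆ ℂ be a Liouville set for the Fock space F_α(ℂ), and let γ > α/2. If Γ = (γ_λ)_{λ∈Λ} ⊆ ℂ is a sequence indexed by Λ for which there exists κ > 0 with |γ_λ − λ| ≤ κ·e^{-γ|λ|²} for all λ ∈ Λ, then the set {γ_λ : λ ∈ Λ} is a Liouville set for F_α(ℂ). -/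
open MeasureTheory Complex Metric Set

lemma circle_mvp (f : ℂ → ℂ) (hf : Differentiable ℂ f) (c : ℂ) {R : ℝ} (hR : 0 < R) :
    f c = (2 * Real.pi)⁻¹ • ∫ θ in (0:ℝ)..(2 * Real.pi), f (circleMap c R θ) := by
  have hw : c ∈ ball c R := mem_ball_self hR
  have h1 := (hf.differentiableOn (s := closedBall c R)).circleIntegral_sub_inv_smul hw
  rw [circleIntegral] at h1
  simp only [deriv_circleMap, smul_eq_mul] at h1
  have h2 : ∀ θ : ℝ, circleMap 0 R θ * I * ((circleMap c R θ - c)⁻¹ * f (circleMap c R θ))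
      = I * f (circleMap c R θ) := by
    intro θ
    have hne : circleMap 0 R θ ≠ 0 := by
      simpa [circleMap_eq_center_iff] using hR.ne'
    rw [circleMap_sub_center]
    field_simp
  rw [intervalIntegral.integral_congr (fun θ _ => h2 θ),
      intervalIntegral.integral_const_mul] at h1
  have hI : (I : ℂ) ≠ 0 := I_ne_zero
  have h3 : (∫ θ in (0:ℝ)..(2 * Real.pi), f (circleMap c R θ)) = 2 * Real.pi * f c := by
    have h1' : I * (∫ θ in (0:ℝ)..(2 * Real.pi), f (circleMap c R θ))
        = I * (2 * Real.pi * f c) := by rw [h1]; ring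
    exact mul_left_cancel₀ hI h1'

  rw [h3]
  rw [real_smul]
  push_cast
  have : (2 * Real.pi : ℂ) ≠ 0 := by
    simpa using Real.pi_ne_zero
  field_simp

lemma circle_sq (f : ℂ → ℂ) (hf : Differentiable ℂ f) (c : ℂ) {R : ℝ} (hR : 0 < R) :
    ‖f c‖ ^ 2 ≤ (2 * Real.pi)⁻¹ * ∫ θ in (0:ℝ)..(2 * Real.pi), ‖f (circleMap c R θ)‖ ^ 2 := by
  have h := circle_mvp (fun z => (f z) ^ 2) (fun z => ((hf z).pow 2)) c hR
  have h2 : ‖f c ^ 2‖ ≤ (2 * Real.pi)⁻¹ *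
      ∫ θ in (0:ℝ)..(2 * Real.pi), ‖(f (circleMap c R θ)) ^ 2‖ := by
    rw [show f c ^ 2 = (2 * Real.pi)⁻¹ • ∫ θ in (0:ℝ)..(2 * Real.pi), (f (circleMap c R θ)) ^ 2 from h, real_smul, norm_mul]
    gcongr
    · simp [_root_.abs_of_nonneg Real.pi_pos.le]
    · exact intervalIntegral.norm_integral_le_integral_norm (by positivity)
  simpa [norm_pow] using h2

lemma pointwise_sq (α : ℝ) (hα : 0 < α) (F : ℂ → ℂ) (hF : Differentiable ℂ F)
    (hint : Integrable fun z : ℂ => ‖F z‖ ^ 2 * Real.exp (-α * ‖z‖ ^ 2)) (c : ℂ) :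
    Real.pi * Real.exp (-α * (‖c‖ + 1) ^ 2) * ‖F c‖ ^ 2
      ≤ ∫ z : ℂ, ‖F z‖ ^ 2 * Real.exp (-α * ‖z‖ ^ 2) := by
  set h : ℂ → ℝ := fun z => ‖F z‖ ^ 2 * Real.exp (-α * ‖z‖ ^ 2) with hh
  have hcont : Continuous h := by
    exact (hF.continuous.norm.pow 2).mul (Real.continuous_exp.comp (continuous_const.mul (continuous_norm.pow 2)))
  have hpos : ∀ z, 0 ≤ h z := fun z => by positivity
  set I := ∫ z : ℂ, h z with hI
  set e : ℝ := Real.exp (-α * (‖c‖ + 1) ^ 2) with he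
  -- the function in polar coordinates
  set k : ℝ × ℝ → ℝ := fun p => p.1 * h (circleMap c p.1 p.2) with hk
  have hcm : Continuous fun p : ℝ × ℝ => circleMap c p.1 p.2 := by
    simp only [circleMap]
    continuity
  have hkcont : Continuous k := continuous_fst.mul (hcont.comp hcm)
  have hsymm : ∀ p : ℝ × ℝ, c + Complex.polarCoord.symm p = circleMap c p.1 p.2 := by
    intro p
    rw [Complex.polarCoord_symm_apply, circleMap, Complex.exp_mul_I]
    push_cast
    ring
  set s : Set ℝ := Ioo (0:ℝ) 1 with hs
  set t : Set ℝ := Ioo (-Real.pi) Real.pi with ht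
  have hkint : IntegrableOn k (s ×ˢ t) := by
    have : IsCompact ((Icc (0:ℝ) 1) ×ˢ (Icc (-Real.pi) Real.pi)) :=
      isCompact_Icc.prod isCompact_Icc
    exact (hkcont.continuousOn.integrableOn_compact this).mono_set
      (prod_mono Ioo_subset_Icc_self Ioo_subset_Icc_self)
  have hpolar : ∫ p in s ×ˢ t, k p = ∫ w in ball (0:ℂ) 1, h (c + w) := by
    have key := Complex.integral_comp_polarCoord_symm
      ((ball (0:ℂ) 1).indicator fun w => h (c + w))
    rw [integral_indicator measurableSet_ball] at key
    rw [← key, polarCoord_target]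
    have hcongr : EqOn
        ((s ×ˢ t).indicator k)
        (fun p : ℝ × ℝ => p.1 •
          ((ball (0:ℂ) 1).indicator (fun w => h (c + w)) (Complex.polarCoord.symm p)))
        (Ioi (0:ℝ) ×ˢ Ioo (-Real.pi) Real.pi) := by
      intro p hp
      obtain ⟨hp1, hp2⟩ := hp
      have habs : ‖Complex.polarCoord.symm p‖ = p.1 := by
        rw [Complex.norm_polarCoord_symm, abs_of_pos hp1]
      simp only [indicator_apply, mem_prod, mem_ball_zero_iff, habs, smul_eq_mul]
      by_cases h1 : p.1 < 1
      · rw [if_pos (show p.1 ∈ s ∧ p.2 ∈ t from ⟨mem_Ioo.2 ⟨hp1, h1⟩, hp2⟩),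
          indicator_of_mem (mem_ball_zero_iff.2 (by rw [habs]; exact h1)), hsymm p]
      · rw [if_neg (show ¬(p.1 ∈ s ∧ p.2 ∈ t) from fun hc => h1 (mem_Ioo.1 hc.1).2),
          indicator_of_notMem (fun hc => h1 (by rw [← habs]; exact mem_ball_zero_iff.1 hc)),
          mul_zero]
    rw [← setIntegral_congr_fun (measurableSet_Ioi.prod measurableSet_Ioo) hcongr,
      setIntegral_indicator (measurableSet_Ioo.prod measurableSet_Ioo),
      inter_eq_right.2 (prod_mono Ioo_subset_Ioi_self subset_rfl)]
  have hiter : ∫ p in s ×ˢ t, k p = ∫ R in s, ∫ θ in t, k (R, θ) :=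
    setIntegral_prod k hkint
  have hΦint : IntegrableOn (fun R => ∫ θ in t, k (R, θ)) s := by
    have h1 : Integrable k ((volume.restrict s).prod (volume.restrict t)) := by
      rw [Measure.prod_restrict]
      exact hkint
    exact h1.integral_prod_left
  have hinner : ∀ R : ℝ, ∫ θ in t, k (R, θ) = ∫ θ in (0:ℝ)..(2*Real.pi), k (R, θ) := by
    intro R
    have hper : Function.Periodic (fun θ => k (R, θ)) (2*Real.pi) := by
      intro θ
      simp only [hk]
      rw [periodic_circleMap c R θ]
    have h1 : ∫ θ in t, k (R, θ) = ∫ θ in (-Real.pi)..Real.pi, k (R, θ) := by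
      rw [intervalIntegral.integral_of_le (by linarith [Real.pi_pos]),
        integral_Ioc_eq_integral_Ioo]
    rw [h1]
    have h2 := hper.intervalIntegral_add_eq (-Real.pi) 0
    rw [show -Real.pi + 2*Real.pi = Real.pi by ring, zero_add] at h2
    exact h2
  have stepA : ∀ R ∈ s, 2*Real.pi*e*‖F c‖^2*R ≤ ∫ θ in (0:ℝ)..(2*Real.pi), k (R, θ) := by
    intro R hRs
    obtain ⟨hR0, hR1⟩ := mem_Ioo.1 hRs
    have hsq := circle_sq F hF c hR0
    set X := ∫ θ in (0:ℝ)..(2*Real.pi), ‖F (circleMap c R θ)‖^2 with hX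
    have hFc : Continuous fun θ => F (circleMap c R θ) := hF.continuous.comp (continuous_circleMap c R)
    have hmono : ∫ θ in (0:ℝ)..(2*Real.pi), (R * e) * ‖F (circleMap c R θ)‖^2
        ≤ ∫ θ in (0:ℝ)..(2*Real.pi), k (R, θ) := by
      apply intervalIntegral.integral_mono_on (by positivity)
      · exact (continuous_const.mul (hFc.norm.pow 2)).intervalIntegrable _ _
      · exact (show Continuous fun u : ℝ => k (R, u) from
          hkcont.comp (continuous_const.prodMk continuous_id)).intervalIntegrable _ _
      · intro θ hθ
        have hub : ‖circleMap c R θ‖ ≤ ‖c‖ + 1 := by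
          calc ‖circleMap c R θ‖ = ‖c + (circleMap c R θ - c)‖ := by ring_nf
            _ ≤ ‖c‖ + ‖circleMap c R θ - c‖ := norm_add_le _ _
            _ ≤ ‖c‖ + 1 := by
                rw [circleMap_sub_center]
                have hnr : ‖circleMap 0 R θ‖ = R := by
                  rw [norm_circleMap_zero, _root_.abs_of_pos hR0]
                rw [hnr]
                gcongr
        have hee : e ≤ Real.exp (-α * ‖circleMap c R θ‖^2) := by
          apply Real.exp_le_exp.2
          have h2 : ‖circleMap c R θ‖^2 ≤ (‖c‖+1)^2 := by
            nlinarith [norm_nonneg (circleMap c R θ)]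
          nlinarith
        show (R * e) * ‖F (circleMap c R θ)‖^2 ≤ R * h (circleMap c R θ)
        simp only [hh]
        nlinarith [sq_nonneg ‖F (circleMap c R θ)‖, hR0.le,
          mul_le_mul_of_nonneg_left hee (sq_nonneg ‖F (circleMap c R θ)‖)]
    have hconst : ∫ θ in (0:ℝ)..(2*Real.pi), (R * e) * ‖F (circleMap c R θ)‖^2
        = (R * e) * X := intervalIntegral.integral_const_mul _ _
    have hpos2π : (0:ℝ) < 2*Real.pi := by positivity
    have hXnn : 2*Real.pi*e*‖F c‖^2*R ≤ (R * e) * X := by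
      have h5 := mul_le_mul_of_nonneg_left hsq (show (0:ℝ) ≤ 2*Real.pi*e*R by positivity)
      have h6 : 2*Real.pi*e*R*((2*Real.pi)⁻¹ * X) = R*e*X := by
        field_simp
      nlinarith [h5, h6]
    linarith [hXnn, hconst ▸ hmono]
  have hid : ∫ R in s, R = 1/2 := by
    rw [hs, ← integral_Ioc_eq_integral_Ioo, ← intervalIntegral.integral_of_le zero_le_one]
    simp [integral_id]
  have hleft : ∫ R in s, (2*Real.pi*e*‖F c‖^2) * R = Real.pi*e*‖F c‖^2 := by
    rw [MeasureTheory.integral_const_mul, hid]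
    ring
  have hcompare : ∫ R in s, (2*Real.pi*e*‖F c‖^2) * R ≤ ∫ R in s, ∫ θ in t, k (R, θ) := by
    apply setIntegral_mono_on _ hΦint measurableSet_Ioo
    · intro R hR
      rw [hinner R]
      exact stepA R hR
    · exact ((continuous_const.mul continuous_id).continuousOn.integrableOn_compact
        (isCompact_Icc (a := (0:ℝ)) (b := 1))).mono_set Ioo_subset_Icc_self
  have htransl : ∫ w : ℂ, h (c + w) = I := integral_add_left_eq_self h c
  have hball : ∫ w in ball (0:ℂ) 1, h (c + w) ≤ I := by
    rw [← htransl]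
    exact setIntegral_le_integral (hint.comp_add_left c) (ae_of_all _ fun w => hpos _)
  have hfinal : Real.pi*e*‖F c‖^2 ≤ ∫ R in s, ∫ θ in t, k (R, θ) := hleft ▸ hcompare
  rw [← hiter, hpolar] at hfinal
  linarith

lemma pointwise_norm (α : ℝ) (hα : 0 < α) (F : ℂ → ℂ) (hF : Differentiable ℂ F)
    (hint : Integrable fun z : ℂ => ‖F z‖ ^ 2 * Real.exp (-α * ‖z‖ ^ 2)) (c : ℂ) :
    ‖F c‖ ≤ Real.sqrt ((∫ z : ℂ, ‖F z‖ ^ 2 * Real.exp (-α * ‖z‖ ^ 2)) / Real.pi)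
      * Real.exp (α / 2 * (‖c‖ + 1) ^ 2) := by
  have h := pointwise_sq α hα F hF hint c
  set I := ∫ z : ℂ, ‖F z‖ ^ 2 * Real.exp (-α * ‖z‖ ^ 2) with hI
  have hπ : (0:ℝ) < Real.pi := Real.pi_pos
  have hInn : 0 ≤ I := integral_nonneg fun z => by positivity
  have hsq : ‖F c‖ ^ 2 ≤ (I / Real.pi) * Real.exp (α * (‖c‖ + 1) ^ 2) := by
    have hepos : (0:ℝ) < Real.exp (-α * (‖c‖ + 1) ^ 2) := Real.exp_pos _
    rw [div_mul_eq_mul_div, le_div_iff₀ hπ]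
    have : Real.exp (α * (‖c‖ + 1) ^ 2) * Real.exp (-α * (‖c‖ + 1) ^ 2) = 1 := by
      rw [← Real.exp_add]; simp
    nlinarith [h, hepos]
  calc ‖F c‖ = Real.sqrt (‖F c‖ ^ 2) := by
        rw [Real.sqrt_sq (norm_nonneg _)]
    _ ≤ Real.sqrt ((I / Real.pi) * Real.exp (α * (‖c‖ + 1) ^ 2)) := Real.sqrt_le_sqrt hsq
    _ = Real.sqrt (I / Real.pi) * Real.exp (α / 2 * (‖c‖ + 1) ^ 2) := by
        rw [Real.sqrt_mul (by positivity), ← Real.exp_half]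
        ring_nf

/-- **Lemma.** The Liouville property is preserved under `e^{-γ|z|²}`-close
perturbations with `γ > α/2`. -/
theorem liouville_of_close_perturbation
    (α γ : ℝ) (hα : 0 < α) (hγ : α / 2 < γ)
    (Λ : Set ℂ) (hΛ : IsLiouvilleSet α Λ)
    (g : ℂ → ℂ)
    (hclose : ∃ κ : ℝ, 0 < κ ∧ ∀ w ∈ Λ, ‖g w - w‖ ≤ κ * Real.exp (-γ * ‖w‖ ^ 2)) :
    IsLiouvilleSet α (g '' Λ) := by
  obtain ⟨κ, hκ, hcl⟩ := hclose
  intro F hF hbdd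
  obtain ⟨C, hC⟩ := hbdd
  obtain ⟨hdiff, hint⟩ := hF
  set P : ℝ := Real.sqrt ((∫ z : ℂ, ‖F z‖ ^ 2 * Real.exp (-α * ‖z‖ ^ 2)) / Real.pi) with hP
  have hPnn : 0 ≤ P := Real.sqrt_nonneg _
  have hpt : ∀ c : ℂ, ‖F c‖ ≤ P * Real.exp (α / 2 * (‖c‖ + 1) ^ 2) :=
    pointwise_norm α hα F hdiff hint
  set β : ℝ := γ - α / 2 with hβ
  have hβpos : 0 < β := by simp only [hβ]; linarith
  set b : ℝ := κ + 2 with hb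
  have hbpos : 0 < b := by positivity
  set D : ℝ := (α * b) ^ 2 / (4 * β) + α / 2 * b ^ 2 with hD
  -- derivative bound on closed balls
  have hder : ∀ w z : ℂ, z ∈ closedBall w κ →
      ‖deriv F z‖ ≤ P * Real.exp (α / 2 * (‖w‖ + b) ^ 2) := by
    intro w z hz
    have hz' : ‖z‖ ≤ ‖w‖ + κ := by
      have := mem_closedBall_iff_norm.1 hz
      calc ‖z‖ = ‖w + (z - w)‖ := by ring_nf
        _ ≤ ‖w‖ + ‖z - w‖ := norm_add_le _ _
        _ ≤ ‖w‖ + κ := by linarith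
    have key : ‖deriv F z‖ ≤ (P * Real.exp (α / 2 * (‖w‖ + b) ^ 2)) / 1 := by
      apply Complex.norm_deriv_le_of_forall_mem_sphere_norm_le (c := z) one_pos
        hdiff.diffContOnCl
      intro ζ hζ
      have hζn : ‖ζ‖ ≤ ‖w‖ + κ + 1 := by
        have h1 : ‖ζ - z‖ = 1 := by
          rw [mem_sphere_iff_norm] at hζ
          exact hζ
        calc ‖ζ‖ = ‖z + (ζ - z)‖ := by ring_nf
          _ ≤ ‖z‖ + ‖ζ - z‖ := norm_add_le _ _
          _ ≤ ‖w‖ + κ + 1 := by rw [h1]; linarith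
      calc ‖F ζ‖ ≤ P * Real.exp (α / 2 * (‖ζ‖ + 1) ^ 2) := hpt ζ
        _ ≤ P * Real.exp (α / 2 * (‖w‖ + b) ^ 2) := by
            have hmono : α / 2 * (‖ζ‖ + 1) ^ 2 ≤ α / 2 * (‖w‖ + b) ^ 2 := by
              have h2 : ‖ζ‖ + 1 ≤ ‖w‖ + b := by rw [hb]; linarith
              have h3 : (‖ζ‖ + 1) ^ 2 ≤ (‖w‖ + b) ^ 2 := by nlinarith [norm_nonneg ζ]
              have h4 : (0:ℝ) ≤ α / 2 := by positivity
              exact mul_le_mul_of_nonneg_left h3 h4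
            exact mul_le_mul_of_nonneg_left (Real.exp_le_exp.2 hmono) hPnn
    simpa using key
  -- boundedness on Λ
  have hbound : ∀ w ∈ Λ, ‖F w‖ ≤ C + κ * P * Real.exp D := by
    intro w hw
    have hexp1 : Real.exp (-γ * ‖w‖ ^ 2) ≤ 1 :=
      Real.exp_le_one_iff.2 (by nlinarith [sq_nonneg ‖w‖])
    have hgw : g w ∈ closedBall w κ := by
      rw [mem_closedBall, dist_eq_norm]
      calc ‖g w - w‖ ≤ κ * Real.exp (-γ * ‖w‖ ^ 2) := hcl w hw
        _ ≤ κ * 1 := by gcongr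
        _ = κ := mul_one κ
    have hMVT : ‖F (g w) - F w‖ ≤
        (P * Real.exp (α / 2 * (‖w‖ + b) ^ 2)) * ‖g w - w‖ :=
      (convex_closedBall w κ).norm_image_sub_le_of_norm_deriv_le
        (fun z _ => hdiff z) (fun z hz => hder w z hz)
        (mem_closedBall_self hκ.le) hgw
    have hdiffbd : ‖F (g w) - F w‖ ≤ κ * P * Real.exp D := by
      have h1 : ‖F (g w) - F w‖
          ≤ (P * Real.exp (α / 2 * (‖w‖ + b) ^ 2)) * (κ * Real.exp (-γ * ‖w‖ ^ 2)) :=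
        hMVT.trans (mul_le_mul_of_nonneg_left (hcl w hw) (by positivity))
      have h2 : (P * Real.exp (α / 2 * (‖w‖ + b) ^ 2)) * (κ * Real.exp (-γ * ‖w‖ ^ 2))
          = κ * P * Real.exp (α / 2 * (‖w‖ + b) ^ 2 + -γ * ‖w‖ ^ 2) := by
        rw [Real.exp_add]
        ring
      have h3 : Real.exp (α / 2 * (‖w‖ + b) ^ 2 + -γ * ‖w‖ ^ 2) ≤ Real.exp D := by
        apply Real.exp_le_exp.2
        rw [hD, hβ]
        have hwnn : (0:ℝ) ≤ ‖w‖ := norm_nonneg w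
        have hsq := sq_nonneg (2 * β * ‖w‖ - α * b)
        rw [hβ] at hsq
        rw [div_add' _ _ _ (by positivity), le_div_iff₀ (by positivity : (0:ℝ) < 4 * (γ - α/2))]
        nlinarith [hsq, hwnn]
      calc ‖F (g w) - F w‖ ≤ κ * P * Real.exp (α / 2 * (‖w‖ + b) ^ 2 + -γ * ‖w‖ ^ 2) := by
            rw [← h2]; exact h1
        _ ≤ κ * P * Real.exp D :=
            mul_le_mul_of_nonneg_left h3 (by positivity)
    have hgwΛ : ‖F (g w)‖ ≤ C := hC (g w) ⟨w, hw, rfl⟩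
    calc ‖F w‖ = ‖F (g w) - (F (g w) - F w)‖ := by ring_nf
      _ ≤ ‖F (g w)‖ + ‖F (g w) - F w‖ := norm_sub_le _ _
      _ ≤ C + κ * P * Real.exp D := by linarith
  exact hΛ F ⟨hdiff, hint⟩ ⟨C + κ * P * Real.exp D, hbound⟩
end

section
/- Let Ω ⊆ ℂ be a closed disk of positive radius, and let μ be the uniform probability measure on Ω (normalized Lebesgue measure). Then for every ε > 0, the product measure μ ⊗ μ ⊗ μ of the set {(a,b,c) ∈ ℂ³ : φ(a,b,c) < ε} is at most 4ε. Equivalently, if A, B, C are independent ℂ-valued random variables each uniformly distributed on Ω, then P[φ(A,B,C) < ε] ≤ 4ε. -/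
open MeasureTheory Complex
open scoped ENNReal NNReal

/-- The median of three real numbers. -/
noncomputable def median3 (x y z : ℝ) : ℝ := max (min x y) (min (max x y) z)

open Classical in
/-- `φ(a,b,c)`: the median (second-smallest) of the three interior angles of the
triangle with vertices `a`, `b`, `c`, with the convention that it is `0` for
collinear points. -/
noncomputable def medianAngle (a b c : ℂ) : ℝ :=
  if Collinear ℝ ({a, b, c} : Set ℂ) then 0
  else median3 (EuclideanGeometry.angle b a c) (EuclideanGeometry.angle a b c)
    (EuclideanGeometry.angle a c b)

/-- The uniform probability measure on a set `s ⊆ ℂ` (normalized Lebesgue measure). -/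
noncomputable def unifOn (s : Set ℂ) : Measure ℂ := (volume s)⁻¹ • volume.restrict s


open ComplexConjugate



/-- Collinear points give zero imaginary part of the "cross product". -/
lemma collinear_im_eq_zero {p q x : ℂ} (h : Collinear ℝ ({p, q, x} : Set ℂ)) :
    ((x - p) * (starRingEnd ℂ) (q - p)).im = 0 := by
  rw [collinear_iff_of_mem (Set.mem_insert p _)] at h
  obtain ⟨v, hv⟩ := h
  obtain ⟨s, hq⟩ := hv q (by simp)
  obtain ⟨s', hx⟩ := hv x (by simp)
  have h1 : x - p = (s' : ℂ) * v := by
    rw [hx]; simp [Complex.real_smul]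
  have h2 : q - p = (s : ℂ) * v := by
    rw [hq]; simp [Complex.real_smul]
  rw [h1, h2, map_mul, Complex.conj_ofReal]
  have : (s' : ℂ) * v * ((s : ℂ) * (starRingEnd ℂ) v)
      = ((s' * s : ℝ) : ℂ) * (v * (starRingEnd ℂ) v) := by push_cast; ring
  rw [this, Complex.mul_conj]
  simp [← Complex.ofReal_mul]

/-- If the angle at `p` between `q` and `x` is `< ε ≤ 1/4`, then `x` lies in the
`tan ε`-wedge at `p` around the line through `p`, `q`. -/
lemma wedge_of_angle_lt {ε : ℝ} (hε0 : 0 < ε) (hε4 : ε ≤ 1/4) {p q x : ℂ}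
    (hq : q ≠ p) (hx : x ≠ p) (h : EuclideanGeometry.angle q p x < ε) :
    |((x - p) * (starRingEnd ℂ) (q - p)).im|
      ≤ Real.tan ε * |((x - p) * (starRingEnd ℂ) (q - p)).re| := by
  have hpi := Real.pi_gt_three
  set u := q - p with hu_def
  set v := x - p with hv_def
  have hu : u ≠ 0 := sub_ne_zero.mpr hq
  have hv : v ≠ 0 := sub_ne_zero.mpr hx
  have hangle : EuclideanGeometry.angle q p x = InnerProductGeometry.angle u v := rfl
  set θ := InnerProductGeometry.angle u v with hθ_def
  set N := ‖u‖ * ‖v‖ with hN_def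
  have hN : 0 < N := mul_pos (norm_pos_iff.mpr hu) (norm_pos_iff.mpr hv)
  have hθ0 : 0 ≤ θ := InnerProductGeometry.angle_nonneg u v
  have hθπ : θ ≤ Real.pi := InnerProductGeometry.angle_le_pi u v
  have hθε : θ < ε := by rw [hangle] at h; exact h
  have hre : (v * (starRingEnd ℂ) u).re = Real.cos θ * N := by
    have hcos := InnerProductGeometry.cos_angle u v
    have hinner : (inner ℝ u v : ℝ) = ((starRingEnd ℂ) u * v).re := by rw [Complex.inner, mul_comm]
    have h5 : (v * (starRingEnd ℂ) u).re = (inner ℝ u v : ℝ) := by rw [hinner, mul_comm]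
    rw [h5]
    exact (div_eq_iff (ne_of_gt hN)).mp hcos.symm
  have hsinθ : 0 ≤ Real.sin θ := Real.sin_nonneg_of_nonneg_of_le_pi hθ0 hθπ
  have hsq : ((v * (starRingEnd ℂ) u).re)^2 + ((v * (starRingEnd ℂ) u).im)^2 = N^2 := by
    have h1 : ‖v * (starRingEnd ℂ) u‖ = N := by
      rw [norm_mul, Complex.norm_conj]
      simp only [hN_def]
      ring
    have h2 := Complex.sq_norm (v * (starRingEnd ℂ) u)
    rw [h1] at h2
    rw [h2, Complex.normSq_apply]; ring
  have him : |(v * (starRingEnd ℂ) u).im| = Real.sin θ * N := by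
    have hps := Real.sin_sq_add_cos_sq θ
    have h3 : ((v * (starRingEnd ℂ) u).im)^2 = (Real.sin θ * N)^2 := by
      linear_combination hsq - ((v * (starRingEnd ℂ) u).re + Real.cos θ * N) * hre
        - N^2 * hps
    calc |(v * (starRingEnd ℂ) u).im| = Real.sqrt (((v * (starRingEnd ℂ) u).im)^2) :=
          (Real.sqrt_sq_eq_abs _).symm
      _ = Real.sqrt ((Real.sin θ * N)^2) := by rw [h3]
      _ = |Real.sin θ * N| := Real.sqrt_sq_eq_abs _
      _ = Real.sin θ * N := abs_of_nonneg (mul_nonneg hsinθ hN.le)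
  have hεπ2 : ε < Real.pi / 2 := by linarith
  have hcosε : 0 < Real.cos ε := Real.cos_pos_of_mem_Ioo ⟨by linarith, hεπ2⟩
  have hcosθ : Real.cos ε ≤ Real.cos θ :=
    Real.cos_le_cos_of_nonneg_of_le_pi hθ0 (by linarith) hθε.le
  have hsinε : Real.sin θ ≤ Real.sin ε :=
    (Real.sin_lt_sin_of_lt_of_le_pi_div_two (by linarith) hεπ2.le hθε).le
  have htan : Real.tan ε * Real.cos ε = Real.sin ε := by
    rw [Real.tan_eq_sin_div_cos]; field_simp
  have htan0 : 0 ≤ Real.tan ε := by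
    rw [Real.tan_eq_sin_div_cos]
    exact div_nonneg (Real.sin_nonneg_of_nonneg_of_le_pi hε0.le (by linarith)) hcosε.le
  have hre_pos : 0 < (v * (starRingEnd ℂ) u).re := by
    rw [hre]; nlinarith
  rw [abs_of_pos hre_pos, him, hre]
  nlinarith [mul_le_mul_of_nonneg_left hcosθ htan0, hN.le, hsinε, htan]

/-- Area of a wedge-strip in `ℝ²`. -/
lemma strip_area_bound {m r t : ℝ} (hm : |m| ≤ r) (ht : 0 ≤ t) :
    volume {p : ℝ × ℝ | p.1 ∈ Set.Icc (m - r) (m + r) ∧ |p.2| ≤ t * |p.1|}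
      ≤ ENNReal.ofReal (4 * t * r ^ 2) := by
  have hr : 0 ≤ r := le_trans (abs_nonneg m) hm
  have hW : MeasurableSet {p : ℝ × ℝ | p.1 ∈ Set.Icc (m - r) (m + r) ∧ |p.2| ≤ t * |p.1|} := by
    apply MeasurableSet.inter
    · exact (measurableSet_Icc.preimage measurable_fst)
    · exact measurableSet_le (measurable_snd.abs) ((measurable_fst.abs).const_mul t)
  rw [show (volume : Measure (ℝ × ℝ)) = (volume : Measure ℝ).prod volume from rfl,
    Measure.prod_apply hW]
  have hsec : ∀ x : ℝ, volume (Prod.mk x ⁻¹'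
      {p : ℝ × ℝ | p.1 ∈ Set.Icc (m - r) (m + r) ∧ |p.2| ≤ t * |p.1|})
      = (Set.Icc (m - r) (m + r)).indicator (fun x => ENNReal.ofReal (2 * (t * |x|))) x := by
    intro x
    by_cases hx : x ∈ Set.Icc (m - r) (m + r)
    · have : Prod.mk x ⁻¹' {p : ℝ × ℝ | p.1 ∈ Set.Icc (m - r) (m + r) ∧ |p.2| ≤ t * |p.1|}
          = Set.Icc (-(t * |x|)) (t * |x|) := by
        ext y
        simp only [Set.mem_preimage, Set.mem_setOf_eq, Set.mem_Icc]
        constructor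
        · rintro ⟨-, hy⟩; exact abs_le.mp hy
        · intro hy; exact ⟨Set.mem_Icc.mp hx, abs_le.mpr hy⟩
      rw [this, Real.volume_Icc, Set.indicator_of_mem hx]
      congr 1; ring
    · have : Prod.mk x ⁻¹' {p : ℝ × ℝ | p.1 ∈ Set.Icc (m - r) (m + r) ∧ |p.2| ≤ t * |p.1|}
          = (∅ : Set ℝ) := by
        ext y
        simp only [Set.mem_preimage, Set.mem_setOf_eq, Set.mem_empty_iff_false, iff_false]
        rintro ⟨hx', -⟩
        exact hx hx'
      rw [this, Set.indicator_of_notMem hx]; simp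
  rw [lintegral_congr hsec, lintegral_indicator measurableSet_Icc]
  have hcont : Continuous (fun x : ℝ => 2 * (t * |x|)) := by continuity
  have hint : IntegrableOn (fun x : ℝ => 2 * (t * |x|)) (Set.Icc (m - r) (m + r)) volume :=
    hcont.integrableOn_Icc
  rw [← ofReal_integral_eq_lintegral_ofReal hint
    (Filter.Eventually.of_forall fun x => by positivity)]
  apply ENNReal.ofReal_le_ofReal
  have hm1 : m - r ≤ 0 := by cases abs_le.mp hm; linarith
  have hm2 : 0 ≤ m + r := by cases abs_le.mp hm; linarith
  have hle : m - r ≤ m + r := by linarith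
  rw [MeasureTheory.integral_Icc_eq_integral_Ioc,
    ← intervalIntegral.integral_of_le hle]
  have hii : ∀ a b : ℝ, IntervalIntegrable (fun x : ℝ => 2 * (t * |x|)) volume a b :=
    fun a b => hcont.intervalIntegrable a b
  rw [← intervalIntegral.integral_add_adjacent_intervals (hii (m - r) 0) (hii 0 (m + r))]
  have h1 : ∫ x in (m - r)..0, 2 * (t * |x|) = t * (m - r) ^ 2 := by
    have : ∀ x ∈ Set.uIcc (m - r) 0, 2 * (t * |x|) = 2 * t * (-x) := by
      intro x hx
      rw [Set.uIcc_of_le hm1] at hx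
      rw [abs_of_nonpos hx.2]; ring
    rw [intervalIntegral.integral_congr this]
    rw [intervalIntegral.integral_const_mul, intervalIntegral.integral_neg,
      integral_id]
    ring
  have h2 : ∫ x in (0:ℝ)..(m + r), 2 * (t * |x|) = t * (m + r) ^ 2 := by
    have : ∀ x ∈ Set.uIcc (0:ℝ) (m + r), 2 * (t * |x|) = 2 * t * x := by
      intro x hx
      rw [Set.uIcc_of_le hm2] at hx
      rw [_root_.abs_of_nonneg hx.1]; ring
    rw [intervalIntegral.integral_congr this]
    rw [intervalIntegral.integral_const_mul, integral_id]
    ring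
  rw [h1, h2]
  have hsq : m ^ 2 ≤ r ^ 2 := sq_le_sq' (abs_le.mp hm).1 (abs_le.mp hm).2
  nlinarith [mul_nonneg ht (sub_nonneg.mpr hsq)]

/-- Area of the wedge in `ℂ` intersected with a disk containing the origin-apex. -/
lemma wedge_area_bound {z₀ : ℂ} {r t : ℝ} (hz₀ : ‖z₀‖ ≤ r) (ht : 0 ≤ t) :
    volume ({z : ℂ | |z.im| ≤ t * |z.re|} ∩ Metric.closedBall z₀ r)
      ≤ ENNReal.ofReal (4 * t * r ^ 2) := by
  set W : Set (ℝ × ℝ) :=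
    {p : ℝ × ℝ | p.1 ∈ Set.Icc (z₀.re - r) (z₀.re + r) ∧ |p.2| ≤ t * |p.1|} with hW_def
  have hW : MeasurableSet W := by
    apply MeasurableSet.inter
    · exact (measurableSet_Icc.preimage measurable_fst)
    · exact measurableSet_le (measurable_snd.abs) ((measurable_fst.abs).const_mul t)
  have hsub : {z : ℂ | |z.im| ≤ t * |z.re|} ∩ Metric.closedBall z₀ r
      ⊆ measurableEquivRealProd ⁻¹' W := by
    rintro z ⟨hz1, hz2⟩
    have hre : |z.re - z₀.re| ≤ r := by
      have h1 : |(z - z₀).re| ≤ ‖z - z₀‖ := Complex.abs_re_le_norm _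
      have h2 : ‖z - z₀‖ ≤ r := by
        rwa [Metric.mem_closedBall, Complex.dist_eq] at hz2
      simpa using h1.trans h2
    refine ⟨?_, ?_⟩
    · show z.re ∈ Set.Icc (z₀.re - r) (z₀.re + r)
      rw [Set.mem_Icc]
      constructor
      · linarith [(abs_le.mp hre).1]
      · linarith [(abs_le.mp hre).2]
    · show |z.im| ≤ t * |z.re|
      exact hz1
  calc volume ({z : ℂ | |z.im| ≤ t * |z.re|} ∩ Metric.closedBall z₀ r)
      ≤ volume (measurableEquivRealProd ⁻¹' W) := measure_mono hsub
    _ = volume W := Complex.volume_preserving_equiv_real_prod.measure_preimage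
        hW.nullMeasurableSet
    _ ≤ ENNReal.ofReal (4 * t * r ^ 2) := by
        apply strip_area_bound _ ht
        have := Complex.abs_re_le_norm z₀
        exact this.trans hz₀
lemma disk_wedge_bound {c₀ : ℂ} {r t : ℝ} (ht : 0 ≤ t) {a b : ℂ}
    (ha : a ∈ Metric.closedBall c₀ r) (hab : b ≠ a) :
    volume ({c : ℂ | |((c - a) * (starRingEnd ℂ) (b - a)).im|
        ≤ t * |((c - a) * (starRingEnd ℂ) (b - a)).re|} ∩ Metric.closedBall c₀ r)
      ≤ ENNReal.ofReal (4 * t * r ^ 2) := by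
  set A : ℝ := ‖b - a‖ with hA_def
  have hA : 0 < A := by
    rw [hA_def]
    simpa using sub_ne_zero.mpr hab
  set u : ℂ := (b - a) / (A : ℂ) with hu_def
  have hu : ‖u‖ = 1 := by
    rw [hu_def, norm_div, Complex.norm_real, Real.norm_eq_abs, _root_.abs_of_pos hA, div_self hA.ne']
  set U : Circle := ⟨(starRingEnd ℂ) u, by
    simp [Circle, Submonoid.unitSphere, mem_sphere_zero_iff_norm, hu]⟩
    with hU_def
  have hUcoe : (U : ℂ) = (starRingEnd ℂ) u := rfl
  set ψ : ℂ → ℂ := fun c => rotation U (c - a) with hψ_def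
  have hψmp : MeasurePreserving ψ volume volume :=
    (rotation U).measurePreserving.comp (measurePreserving_sub_right volume a)
  set z₀ : ℂ := ψ c₀ with hz₀_def
  have hz₀ : ‖z₀‖ ≤ r := by
    have h6 : ‖z₀‖ = ‖c₀ - a‖ := by
      rw [hz₀_def, hψ_def]
      simp only [rotation_apply, hUcoe, norm_mul]
      rw [Complex.norm_conj, hu, one_mul]
    rw [h6]
    have h7 := Metric.mem_closedBall.mp ha
    rw [Complex.dist_eq] at h7
    rwa [norm_sub_rev] at h7
  have hkey : (b - a) = (A : ℂ) * u := by
    rw [hu_def, mul_div_cancel₀]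
    simp [Complex.ofReal_eq_zero, hA.ne']
  have hset : {c : ℂ | |((c - a) * (starRingEnd ℂ) (b - a)).im|
        ≤ t * |((c - a) * (starRingEnd ℂ) (b - a)).re|} ∩ Metric.closedBall c₀ r
      = ψ ⁻¹' ({z : ℂ | |z.im| ≤ t * |z.re|} ∩ Metric.closedBall z₀ r) := by
    ext c
    have hprod : (c - a) * (starRingEnd ℂ) (b - a) = (A : ℂ) * ψ c := by
      rw [hkey, map_mul, Complex.conj_ofReal, hψ_def]
      simp only [rotation_apply, hUcoe]
      ring
    have him : ((c - a) * (starRingEnd ℂ) (b - a)).im = A * (ψ c).im := by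
      rw [hprod]; simp
    have hre : ((c - a) * (starRingEnd ℂ) (b - a)).re = A * (ψ c).re := by
      rw [hprod]; simp
    have hdist : dist (ψ c) z₀ = dist c c₀ := by
      rw [hz₀_def, hψ_def, Complex.dist_eq, Complex.dist_eq]
      simp only [rotation_apply, hUcoe]
      rw [← mul_sub, norm_mul, Complex.norm_conj, hu, one_mul]
      congr 1; ring
    have hiff : ∀ x y : ℝ, (A * |x| ≤ t * (A * |y|)) ↔ (|x| ≤ t * |y|) := by
      intro x y
      constructor
      · intro h
        rw [show t * (A * |y|) = A * (t * |y|) from by ring] at h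
        exact le_of_mul_le_mul_left h hA
      · intro h
        rw [show t * (A * |y|) = A * (t * |y|) from by ring]
        exact mul_le_mul_of_nonneg_left h hA.le
    simp only [Set.mem_inter_iff, Set.mem_setOf_eq, Set.mem_preimage, Metric.mem_closedBall,
      him, hre, abs_mul, _root_.abs_of_pos hA, hdist, hiff]
  rw [hset]
  have hWmeas : MeasurableSet ({z : ℂ | |z.im| ≤ t * |z.re|} ∩ Metric.closedBall z₀ r) := by
    apply MeasurableSet.inter
    · exact measurableSet_le (Complex.measurable_im.abs)
        ((Complex.measurable_re.abs).const_mul t)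
    · exact measurableSet_closedBall
  rw [hψmp.measure_preimage hWmeas.nullMeasurableSet]
  exact wedge_area_bound hz₀ ht

/-- **Lemma.** Three independent uniform points in a disk have median triangle angle
at least `ε` except on an event of probability at most `4ε`. -/
theorem prob_small_median_angle_le
    (c₀ : ℂ) (r : ℝ) (hr : 0 < r) (ε : ℝ) (hε : 0 < ε) :
    ((unifOn (Metric.closedBall c₀ r)).prod
        ((unifOn (Metric.closedBall c₀ r)).prod (unifOn (Metric.closedBall c₀ r))))
      {p : ℂ × ℂ × ℂ | medianAngle p.1 p.2.1 p.2.2 < ε} ≤ ENNReal.ofReal (4 * ε) := by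
  set D := Metric.closedBall c₀ r with hD_def
  have hD : MeasurableSet D := measurableSet_closedBall
  set μ := unifOn D with hμ_def
  have hVD : volume D = ENNReal.ofReal r ^ 2 * NNReal.pi := Complex.volume_closedBall c₀ r
  have hVne : volume D ≠ 0 := by
    rw [hVD]
    apply mul_ne_zero
    · exact pow_ne_zero _ (ENNReal.ofReal_pos.mpr hr).ne'
    · exact_mod_cast NNReal.pi_ne_zero
  have hVtop : volume D ≠ ⊤ := by
    rw [hVD]
    exact ENNReal.mul_ne_top (ENNReal.pow_ne_top ENNReal.ofReal_ne_top) ENNReal.coe_ne_top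
  have hμ_apply : ∀ s : Set ℂ, μ s = (volume D)⁻¹ * volume (s ∩ D) := by
    intro s
    rw [hμ_def, unifOn, Measure.smul_apply, Measure.restrict_apply' hD, smul_eq_mul]
  haveI hprob : IsProbabilityMeasure μ := ⟨by
    rw [hμ_apply, Set.univ_inter, ENNReal.inv_mul_cancel hVne hVtop]⟩
  by_cases hε4 : 1/4 < ε
  · refine le_trans prob_le_one ?_
    rw [show (1 : ℝ≥0∞) = ENNReal.ofReal 1 by simp]
    exact ENNReal.ofReal_le_ofReal (by linarith)
  push_neg at hε4
  set t := Real.tan ε with ht_def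
  have hpi := Real.pi_gt_three
  have hsinε := Real.sin_le hε.le
  have hcosε_lb : 1 - ε ^ 2 / 2 ≤ Real.cos ε := Real.one_sub_sq_div_two_le_cos
  have hcosε : 0 < Real.cos ε := Real.cos_pos_of_mem_Ioo ⟨by linarith, by linarith⟩
  have ht0 : 0 ≤ t := by
    rw [ht_def, Real.tan_eq_sin_div_cos]
    exact div_nonneg (Real.sin_nonneg_of_nonneg_of_le_pi hε.le (by linarith)) hcosε.le
  have h2t : 2 * t ≤ Real.pi * ε := by
    have htano : t * Real.cos ε = Real.sin ε := by
      rw [ht_def, Real.tan_eq_sin_div_cos]; field_simp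
    have hε2 : ε ^ 2 ≤ 1 / 16 := by nlinarith
    have hcos31 : (31 : ℝ) / 32 ≤ Real.cos ε := by linarith
    have h1 : t * (31 / 32) ≤ ε := by
      nlinarith [mul_le_mul_of_nonneg_left hcos31 ht0]
    have h3 : (0 : ℝ) ≤ (Real.pi - 3) * ε := mul_nonneg (by linarith) hε.le
    nlinarith [h1, h3]
  set F₁ := {p : ℂ × ℂ × ℂ | |((p.2.2 - p.1) * (starRingEnd ℂ) (p.2.1 - p.1)).im|
      ≤ t * |((p.2.2 - p.1) * (starRingEnd ℂ) (p.2.1 - p.1)).re|} with hF₁_def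
  set F₂ := {p : ℂ × ℂ × ℂ | |((p.2.2 - p.2.1) * (starRingEnd ℂ) (p.1 - p.2.1)).im|
      ≤ t * |((p.2.2 - p.2.1) * (starRingEnd ℂ) (p.1 - p.2.1)).re|} with hF₂_def
  have hsub : {p : ℂ × ℂ × ℂ | medianAngle p.1 p.2.1 p.2.2 < ε} ⊆ F₁ ∪ F₂ := by
    rintro ⟨a, b, c⟩ h
    simp only [Set.mem_setOf_eq] at h
    unfold medianAngle at h
    split_ifs at h with hcol
    · left
      show |((c - a) * (starRingEnd ℂ) (b - a)).im|
        ≤ t * |((c - a) * (starRingEnd ℂ) (b - a)).re|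
      rw [collinear_im_eq_zero hcol]
      simpa using mul_nonneg ht0 (abs_nonneg _)
    · have hba : b ≠ a := by
        rintro rfl
        exact hcol ((collinear_pair ℝ b c).subset (by intro x hx; simp at hx ⊢; tauto))
      have hca : c ≠ a := by
        rintro rfl
        exact hcol ((collinear_pair ℝ c b).subset (by intro x hx; simp at hx ⊢; tauto))
      have hcb : c ≠ b := by
        rintro rfl
        exact hcol ((collinear_pair ℝ a c).subset (by intro x hx; simp at hx ⊢; tauto))
      simp only [median3] at h
      have hmin : min (EuclideanGeometry.angle b a c) (EuclideanGeometry.angle a b c) < ε :=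
        (le_max_left _ _).trans_lt h
      rcases min_lt_iff.mp hmin with hα | hβ
      · left
        exact wedge_of_angle_lt hε hε4 hba hca hα
      · right
        exact wedge_of_angle_lt hε hε4 hba.symm hcb hβ
  have hconj : Continuous (starRingEnd ℂ) := Complex.continuous_conj
  have hcont₁ : Continuous fun p : ℂ × ℂ × ℂ =>
      ((p.2.2 - p.1) * (starRingEnd ℂ) (p.2.1 - p.1)) :=
    (continuous_snd.snd.sub continuous_fst).mul
      (hconj.comp (continuous_snd.fst.sub continuous_fst))
  have hcont₂ : Continuous fun p : ℂ × ℂ × ℂ =>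
      ((p.2.2 - p.2.1) * (starRingEnd ℂ) (p.1 - p.2.1)) :=
    (continuous_snd.snd.sub continuous_snd.fst).mul
      (hconj.comp (continuous_fst.sub continuous_snd.fst))
  have hmF₁ : MeasurableSet F₁ :=
    measurableSet_le ((Complex.continuous_im.comp hcont₁).abs.measurable)
      (((Complex.continuous_re.comp hcont₁).abs.measurable).const_mul t)
  have hmF₂ : MeasurableSet F₂ :=
    measurableSet_le ((Complex.continuous_im.comp hcont₂).abs.measurable)
      (((Complex.continuous_re.comp hcont₂).abs.measurable).const_mul t)
  set B : ℝ≥0∞ := (volume D)⁻¹ * ENNReal.ofReal (4 * t * r ^ 2) with hB_def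
  have hslice : ∀ a ∈ D, ∀ b : ℂ, b ≠ a →
      μ {c : ℂ | |((c - a) * (starRingEnd ℂ) (b - a)).im|
        ≤ t * |((c - a) * (starRingEnd ℂ) (b - a)).re|} ≤ B := by
    intro a ha b hb
    rw [hμ_apply]
    exact mul_le_mul_right (disk_wedge_bound ht0 ha hb) _
  have hae_mem : ∀ᵐ x ∂μ, x ∈ D := by
    rw [ae_iff]
    rw [hμ_apply]
    have hempty : {x : ℂ | ¬x ∈ D} ∩ D = ∅ := by ext x; simp
    rw [hempty]
    simp
  have hae_ne : ∀ y : ℂ, ∀ᵐ x ∂μ, x ≠ y := by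
    intro y
    rw [ae_iff, hμ_apply]
    have h0 : volume ({x : ℂ | ¬x ≠ y} ∩ D) = 0 := by
      apply le_antisymm _ zero_le
      calc volume ({x : ℂ | ¬x ≠ y} ∩ D) ≤ volume {y} := by
            apply measure_mono
            intro x hx
            simp only [Set.mem_inter_iff, Set.mem_setOf_eq, not_not] at hx
            simp [hx.1]
        _ = 0 := measure_singleton y
    rw [h0, mul_zero]
  have hF₁_bound : (μ.prod (μ.prod μ)) F₁ ≤ B := by
    rw [Measure.prod_apply hmF₁]
    calc ∫⁻ a, (μ.prod μ) (Prod.mk a ⁻¹' F₁) ∂μ ≤ ∫⁻ _, B ∂μ := by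
          apply lintegral_mono_ae
          filter_upwards [hae_mem] with a haD
          rw [Measure.prod_apply (hmF₁.preimage (measurable_prodMk_left))]
          calc ∫⁻ b, μ (Prod.mk b ⁻¹' (Prod.mk a ⁻¹' F₁)) ∂μ ≤ ∫⁻ _, B ∂μ := by
                apply lintegral_mono_ae
                filter_upwards [hae_ne a] with b hb
                exact hslice a haD b hb
            _ = B := by rw [lintegral_const, measure_univ, mul_one]
      _ = B := by rw [lintegral_const, measure_univ, mul_one]
  have hF₂_bound : (μ.prod (μ.prod μ)) F₂ ≤ B := by
    rw [Measure.prod_apply hmF₂]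
    calc ∫⁻ a, (μ.prod μ) (Prod.mk a ⁻¹' F₂) ∂μ ≤ ∫⁻ _, B ∂μ := by
          apply lintegral_mono_ae
          filter_upwards with a
          rw [Measure.prod_apply (hmF₂.preimage (measurable_prodMk_left))]
          calc ∫⁻ b, μ (Prod.mk b ⁻¹' (Prod.mk a ⁻¹' F₂)) ∂μ ≤ ∫⁻ _, B ∂μ := by
                apply lintegral_mono_ae
                filter_upwards [hae_mem, hae_ne a] with b hbD hba
                exact hslice b hbD a (Ne.symm hba)
            _ = B := by rw [lintegral_const, measure_univ, mul_one]
      _ = B := by rw [lintegral_const, measure_univ, mul_one]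
  have hB2 : B ≤ ENNReal.ofReal (2 * ε) := by
    have hπ : ((NNReal.pi : ℝ≥0∞)) = ENNReal.ofReal Real.pi := by
      rw [← NNReal.coe_real_pi, ENNReal.ofReal_coe_nnreal]
    rw [hB_def, mul_comm, ← div_eq_mul_inv, ENNReal.div_le_iff hVne hVtop, hVD,
      ← ENNReal.ofReal_pow hr.le, hπ, ← ENNReal.ofReal_mul (by positivity : (0:ℝ) ≤ r ^ 2),
      ← ENNReal.ofReal_mul (by positivity : (0:ℝ) ≤ 2 * ε)]
    refine ENNReal.ofReal_le_ofReal ?_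
    nlinarith [mul_le_mul_of_nonneg_left h2t (by positivity : (0:ℝ) ≤ 2 * r ^ 2)]
  calc (μ.prod (μ.prod μ)) {p : ℂ × ℂ × ℂ | medianAngle p.1 p.2.1 p.2.2 < ε} ≤ (μ.prod (μ.prod μ)) (F₁ ∪ F₂) := measure_mono hsub
    _ ≤ (μ.prod (μ.prod μ)) F₁ + (μ.prod (μ.prod μ)) F₂ := measure_union_le _ _
    _ ≤ ENNReal.ofReal (2 * ε) + ENNReal.ofReal (2 * ε) :=
        add_le_add (hF₁_bound.trans hB2) (hF₂_bound.trans hB2)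
    _ = ENNReal.ofReal (4 * ε) := by
        rw [← ENNReal.ofReal_add (by linarith) (by linarith)]
        ring_nf
end
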